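/- arXiv:1812.04354 — 2 statements merged into one kernel-verified Lean document; each statement's English description precedes it below -/
import Mathlib

section
/- For X ∈ L^1 and α ∈ (0,1], AV@R_α(X) = sup{ E^Q[−X] | Q a probability measure absolutely continuous with respect to P with dQ/dP ≤ 1/α }. -/
open MeasureTheory Set
open scoped ENNReal

variable {Ω : Type*} [MeasurableSpace Ω]

/-- The (real-valued) Value-at-Risk at level `β`:
`V@R_β(X) = inf {t ∈ ℝ | P[X + t·𝟙 < 0] ≤ β}`. -/
noncomputable def realVaR (P : Measure Ω) (β : ℝ) (X : Ω → ℝ) : ℝ :=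
  sInf {t : ℝ | P {ω | X ω + t < 0} ≤ ENNReal.ofReal β}

/-- The Average-Value-at-Risk at level `α`:
`AV@R_α(X) = (1/α) ∫₀^α V@R_β(X) dβ`. -/
noncomputable def AVaR (P : Measure Ω) (α : ℝ) (X : Ω → ℝ) : ℝ :=
  (1 / α) * ∫ β in Ioo (0 : ℝ) α, realVaR P β X

section Aux

open Filter
open scoped Topology
set_option linter.unusedSectionVars false
set_option linter.unusedVariables false

namespace AVaRAux

/-- Tail probability. -/
noncomputable def F (P : Measure Ω) (X : Ω → ℝ) (t : ℝ) : ℝ≥0∞ := P {ω | X ω + t < 0}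

/-- The defining set of `realVaR`. -/
def S (P : Measure Ω) (X : Ω → ℝ) (β : ℝ) : Set ℝ :=
  {t : ℝ | F P X t ≤ ENNReal.ofReal β}

variable (P : Measure Ω) [IsProbabilityMeasure P] (X : Ω → ℝ)

lemma F_antitone : Antitone (F P X) := fun t t' h =>
  measure_mono fun ω (hω : X ω + t' < 0) =>
    show X ω + t < 0 from lt_of_le_of_lt (by linarith) hω

lemma F_ne_top (t : ℝ) : F P X t ≠ ⊤ := measure_ne_top P _

lemma mem_S_up {β t t'} (h : t ∈ S P X β) (htt' : t ≤ t') : t' ∈ S P X β :=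
  le_trans (F_antitone P X htt') h

lemma S_nonempty (hX : Measurable X) {β : ℝ} (hβ : 0 < β) : (S P X β).Nonempty := by
  have hs : ∀ n : ℕ, MeasurableSet {ω | X ω + (n : ℝ) < 0} := fun n =>
    measurableSet_lt (hX.add_const _) measurable_const
  have hmono : Antitone fun n : ℕ => {ω | X ω + (n : ℝ) < 0} := by
    intro n m hnm ω hω
    simp only [mem_setOf_eq] at hω ⊢
    have : (n : ℝ) ≤ m := Nat.cast_le.mpr hnm
    linarith
  have hiInter : ⋂ n : ℕ, {ω | X ω + (n : ℝ) < 0} = (∅ : Set Ω) := by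
    ext ω
    simp only [mem_iInter, mem_setOf_eq, mem_empty_iff_false, iff_false, not_forall, not_lt]
    obtain ⟨n, hn⟩ := exists_nat_gt (-X ω)
    exact ⟨n, by linarith⟩
  have htend := tendsto_measure_iInter_atTop (μ := P)
    (fun n => (hs n).nullMeasurableSet) hmono ⟨0, measure_ne_top P _⟩
  rw [hiInter] at htend
  simp only [measure_empty] at htend
  have hev : ∀ᶠ n : ℕ in atTop, P {ω | X ω + (n : ℝ) < 0} < ENNReal.ofReal β :=
    htend.eventually_lt_const (by simpa using ENNReal.ofReal_pos.mpr hβ)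
  obtain ⟨n, hn⟩ := hev.exists
  exact ⟨n, le_of_lt hn⟩

lemma S_bddBelow (hX : Measurable X) {β : ℝ} (hβ : β < 1) : BddBelow (S P X β) := by
  have hs : Monotone fun n : ℕ => {ω | X ω + -(n : ℝ) < 0} := by
    intro n m hnm ω hω
    simp only [mem_setOf_eq] at hω ⊢
    have : (n : ℝ) ≤ m := Nat.cast_le.mpr hnm
    linarith
  have hiUnion : ⋃ n : ℕ, {ω | X ω + -(n : ℝ) < 0} = (univ : Set Ω) := by
    ext ω
    simp only [mem_iUnion, mem_setOf_eq, mem_univ, iff_true]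
    obtain ⟨n, hn⟩ := exists_nat_gt (X ω)
    exact ⟨n, by linarith⟩
  have htend := tendsto_measure_iUnion_atTop (μ := P) hs
  rw [hiUnion, measure_univ] at htend
  have hev : ∀ᶠ n : ℕ in atTop, ENNReal.ofReal β < P {ω | X ω + -(n : ℝ) < 0} :=
    htend.eventually_const_lt (by simpa using ENNReal.ofReal_lt_one.mpr hβ)
  obtain ⟨n, hn⟩ := hev.exists
  refine ⟨-(n : ℝ), fun t ht => ?_⟩
  by_contra hlt
  push_neg at hlt
  exact absurd (le_trans (F_antitone P X hlt.le) ht) (not_le.mpr hn)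

lemma le_sInf_S (hX : Measurable X) {β u : ℝ} (hβ : 0 < β)
    (h : ENNReal.ofReal β < F P X u) : u ≤ sInf (S P X β) := by
  refine le_csInf (S_nonempty P X hX hβ) fun t ht => ?_
  by_contra hut
  push_neg at hut
  exact absurd (le_trans (F_antitone P X hut.le) ht) (not_le.mpr h)

lemma sInf_S_le (hX : Measurable X) {β t : ℝ} (hβ : β < 1) (h : t ∈ S P X β) :
    sInf (S P X β) ≤ t := csInf_le (S_bddBelow P X hX hβ) h

lemma F_le_of_sInf_lt (hX : Measurable X) {β u : ℝ} (hβ0 : 0 < β) (hβ1 : β < 1)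
    (h : sInf (S P X β) < u) : F P X u ≤ ENNReal.ofReal β := by
  obtain ⟨t, htS, htu⟩ := exists_lt_of_csInf_lt (S_nonempty P X hX hβ0) h
  exact mem_S_up P X htS htu.le

lemma lt_F_of_lt_sInf (hX : Measurable X) {β t : ℝ} (hβ : β < 1)
    (h : t < sInf (S P X β)) : ENNReal.ofReal β < F P X t := by
  by_contra hle
  push_neg at hle
  exact absurd (sInf_S_le P X hX hβ hle) (not_le.mpr h)

/-- Right-continuity consequence. -/
lemma F_le_self (hX : Measurable X) {αr t₀ : ℝ}
    (h : ∀ u, t₀ < u → F P X u ≤ ENNReal.ofReal αr) : F P X t₀ ≤ ENNReal.ofReal αr := by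
  have hs : Monotone fun n : ℕ => {ω | X ω + (t₀ + 1 / ((n : ℝ) + 1)) < 0} := by
    intro n m hnm ω hω
    have h1 : 1 / ((m : ℝ) + 1) ≤ 1 / ((n : ℝ) + 1) := by
      apply one_div_le_one_div_of_le (by positivity)
      have : (n : ℝ) ≤ m := Nat.cast_le.mpr hnm
      linarith
    simp only [mem_setOf_eq] at hω ⊢
    linarith
  have hiUnion : ⋃ n : ℕ, {ω | X ω + (t₀ + 1 / ((n : ℝ) + 1)) < 0} = {ω | X ω + t₀ < 0} := by
    ext ω
    simp only [mem_iUnion, mem_setOf_eq]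
    constructor
    · rintro ⟨n, hn⟩
      have : 0 < 1 / ((n : ℝ) + 1) := by positivity
      linarith
    · intro hω
      obtain ⟨n, hn⟩ := exists_nat_one_div_lt (show 0 < -(X ω + t₀) by linarith)
      exact ⟨n, by linarith⟩
  have htend := tendsto_measure_iUnion_atTop (μ := P) hs
  rw [hiUnion] at htend
  exact le_of_tendsto htend (Eventually.of_forall fun n =>
    h _ (by linarith [one_div_pos.mpr (show (0:ℝ) < (n:ℝ) + 1 by positivity)]))

lemma le_prob_le (hX : Measurable X) {αr t₀ : ℝ}
    (h : ∀ t, t < t₀ → ENNReal.ofReal αr < F P X t) :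
    ENNReal.ofReal αr ≤ P {ω | X ω + t₀ ≤ 0} := by
  have hs : ∀ n : ℕ, NullMeasurableSet {ω | X ω + (t₀ - 1 / ((n : ℝ) + 1)) < 0} P := fun n =>
    (measurableSet_lt (hX.add_const _) measurable_const).nullMeasurableSet
  have hmono : Antitone fun n : ℕ => {ω | X ω + (t₀ - 1 / ((n : ℝ) + 1)) < 0} := by
    intro n m hnm ω hω
    have h1 : 1 / ((m : ℝ) + 1) ≤ 1 / ((n : ℝ) + 1) := by
      apply one_div_le_one_div_of_le (by positivity)
      have : (n : ℝ) ≤ m := Nat.cast_le.mpr hnm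
      linarith
    simp only [mem_setOf_eq] at hω ⊢
    linarith
  have hiInter : ⋂ n : ℕ, {ω | X ω + (t₀ - 1 / ((n : ℝ) + 1)) < 0} = {ω | X ω + t₀ ≤ 0} := by
    ext ω
    simp only [mem_iInter, mem_setOf_eq]
    constructor
    · intro hall
      by_contra hgt
      push_neg at hgt
      obtain ⟨n, hn⟩ := exists_nat_one_div_lt hgt
      exact absurd (hall n) (by push_neg; linarith)
    · intro hω n
      have : 0 < 1 / ((n : ℝ) + 1) := by positivity
      linarith
  have htend := tendsto_measure_iInter_atTop (μ := P) hs hmono ⟨0, measure_ne_top P _⟩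
  rw [hiInter] at htend
  exact ge_of_tendsto htend (Eventually.of_forall fun n =>
    (h _ (by linarith [one_div_pos.mpr (show (0:ℝ) < (n:ℝ) + 1 by positivity)])).le)


lemma sInf_S_anti (hX : Measurable X) {β β' : ℝ} (hβ : 0 < β) (hβ' : β' < 1) (h : β ≤ β') :
    sInf (S P X β') ≤ sInf (S P X β) :=
  csInf_le_csInf (S_bddBelow P X hX hβ') (S_nonempty P X hX hβ)
    (fun t ht => le_trans ht (ENNReal.ofReal_le_ofReal h))

lemma lintegral_sub_eq (hX : Measurable X) {αr : ℝ} (hα0 : 0 < αr) (hα1 : αr ≤ 1) (t₀ : ℝ)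
    (hF : ∀ u, t₀ < u → F P X u ≤ ENNReal.ofReal αr) :
    ∫⁻ β in Ioo (0:ℝ) αr, ENNReal.ofReal (sInf (S P X β) - t₀) =
      ∫⁻ ω, ENNReal.ofReal (max (-X ω - t₀) 0) ∂P := by
  set g : ℝ → ℝ := fun β => sInf (S P X β) with hg
  set f : ℝ → ℝ := fun β => max (g β - t₀) 0 with hfdef
  have hanti : AntitoneOn f (Ioo 0 αr) := by
    intro β hβ β' hβ' hle
    exact max_le_max (sub_le_sub_right
      (sInf_S_anti P X hX hβ.1 (lt_of_lt_of_le hβ'.2 hα1) hle) _) le_rfl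
  have hfm : AEMeasurable f (volume.restrict (Ioo 0 αr)) :=
    aemeasurable_restrict_of_antitoneOn measurableSet_Ioo hanti
  have hlhs : ∫⁻ β in Ioo (0:ℝ) αr, ENNReal.ofReal (g β - t₀)
      = ∫⁻ β in Ioo (0:ℝ) αr, ENNReal.ofReal (f β) := by
    apply lintegral_congr
    intro β
    rcases le_total (g β - t₀) 0 with h|h
    · rw [show f β = max (g β - t₀) 0 from rfl, max_eq_right h,
        ENNReal.ofReal_of_nonpos h, ENNReal.ofReal_zero]
    · rw [show f β = max (g β - t₀) 0 from rfl, max_eq_left h]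
  have key_lt := lintegral_eq_lintegral_meas_lt (f := f) (volume.restrict (Ioo 0 αr))
    (Eventually.of_forall fun β => le_max_right _ _) hfm
  have key_le := lintegral_eq_lintegral_meas_le (f := f) (volume.restrict (Ioo 0 αr))
    (Eventually.of_forall fun β => le_max_right _ _) hfm
  have claim1 : ∀ s ∈ Ioi (0:ℝ),
      (volume.restrict (Ioo 0 αr)) {β | s < f β} ≤ F P X (t₀ + s) := by
    intro s hs
    have hs0 : (0:ℝ) < s := hs
    have hFu := hF (t₀ + s) (by linarith)
    rw [Measure.restrict_apply' measurableSet_Ioo]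
    have hsub : {β | s < f β} ∩ Ioo 0 αr ⊆ Ioo 0 ((F P X (t₀ + s)).toReal) := by
      rintro β ⟨hβf, hβ0, hβα⟩
      have h1 : s < g β - t₀ := by
        rcases lt_max_iff.mp (show s < max (g β - t₀) 0 from hβf) with h|h
        · exact h
        · linarith
      have h3 : ENNReal.ofReal β < F P X (t₀ + s) := by
        by_contra hc
        push_neg at hc
        have := sInf_S_le P X hX (lt_of_lt_of_le hβα hα1) hc
        have : g β ≤ t₀ + s := this
        linarith
      exact ⟨hβ0, (ENNReal.ofReal_lt_iff_lt_toReal hβ0.le (F_ne_top P X _)).mp h3⟩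
    calc volume ({β | s < f β} ∩ Ioo 0 αr) ≤ volume (Ioo 0 ((F P X (t₀ + s)).toReal)) :=
          measure_mono hsub
      _ = ENNReal.ofReal ((F P X (t₀ + s)).toReal - 0) := Real.volume_Ioo
      _ = F P X (t₀ + s) := by rw [sub_zero, ENNReal.ofReal_toReal (F_ne_top P X _)]
  have claim2 : ∀ s ∈ Ioi (0:ℝ),
      F P X (t₀ + s) ≤ (volume.restrict (Ioo 0 αr)) {β | s ≤ f β} := by
    intro s hs
    have hs0 : (0:ℝ) < s := hs
    have hFu := hF (t₀ + s) (by linarith)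
    have hrα : (F P X (t₀ + s)).toReal ≤ αr := ENNReal.toReal_le_of_le_ofReal hα0.le hFu
    rw [Measure.restrict_apply' measurableSet_Ioo]
    have hsub : Ioo 0 ((F P X (t₀ + s)).toReal) ⊆ {β | s ≤ f β} ∩ Ioo 0 αr := by
      rintro β ⟨hβ0, hβr⟩
      have hβα : β < αr := lt_of_lt_of_le hβr hrα
      have h3 : ENNReal.ofReal β < F P X (t₀ + s) := by
        rw [← ENNReal.ofReal_toReal (F_ne_top P X (t₀ + s))]
        exact (ENNReal.ofReal_lt_ofReal_iff (hβ0.trans hβr)).mpr hβr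
      have h4 : t₀ + s ≤ g β := le_sInf_S P X hX hβ0 h3
      have h5 : s ≤ f β := le_trans (show s ≤ g β - t₀ by linarith) (le_max_left _ _)
      exact ⟨h5, hβ0, hβα⟩
    calc F P X (t₀ + s) = ENNReal.ofReal ((F P X (t₀ + s)).toReal - 0) := by
          rw [sub_zero, ENNReal.ofReal_toReal (F_ne_top P X _)]
      _ = volume (Ioo 0 ((F P X (t₀ + s)).toReal)) := Real.volume_Ioo.symm
      _ ≤ volume ({β | s ≤ f β} ∩ Ioo 0 αr) := measure_mono hsub
  have hmid : ∫⁻ β in Ioo (0:ℝ) αr, ENNReal.ofReal (f β)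
      = ∫⁻ s in Ioi (0:ℝ), F P X (t₀ + s) := by
    refine le_antisymm ?_ ?_
    · rw [key_lt]
      refine lintegral_mono_ae ?_
      exact (ae_restrict_iff' measurableSet_Ioi).mpr (Eventually.of_forall claim1)
    · rw [key_le]
      refine lintegral_mono_ae ?_
      exact (ae_restrict_iff' measurableSet_Ioi).mpr (Eventually.of_forall claim2)
  have hm : Measurable (fun ω => max (-X ω - t₀) 0) :=
    ((hX.neg.sub_const t₀).max measurable_const)
  have keyP := lintegral_eq_lintegral_meas_lt (f := fun ω => max (-X ω - t₀) 0) P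
    (Eventually.of_forall fun ω => le_max_right _ _) hm.aemeasurable
  have hTP : ∫⁻ s in Ioi (0:ℝ), F P X (t₀ + s)
      = ∫⁻ s in Ioi (0:ℝ), P {ω | s < max (-X ω - t₀) 0} := by
    refine setLIntegral_congr_fun measurableSet_Ioi (fun s hs => ?_)
    have hs0 : (0:ℝ) < s := hs
    unfold F
    congr 1
    ext ω
    simp only [mem_setOf_eq, lt_max_iff]
    constructor
    · intro h
      left
      linarith
    · rintro (h|h)
      · linarith
      · linarith
  rw [hlhs, hmid, hTP]
  exact keyP.symm

lemma lintegral_neg_eq (hX : Measurable X) :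
    ∫⁻ β in Ioo (0:ℝ) 1, ENNReal.ofReal (-(sInf (S P X β))) =
      ∫⁻ ω, ENNReal.ofReal (max (X ω) 0) ∂P := by
  set g : ℝ → ℝ := fun β => sInf (S P X β) with hg
  set f : ℝ → ℝ := fun β => max (-(g β)) 0 with hfdef
  have hmono : MonotoneOn f (Ioo 0 1) := by
    intro β hβ β' hβ' hle
    exact max_le_max (neg_le_neg (sInf_S_anti P X hX hβ.1 hβ'.2 hle)) le_rfl
  have hfm : AEMeasurable f (volume.restrict (Ioo (0:ℝ) 1)) :=
    aemeasurable_restrict_of_monotoneOn measurableSet_Ioo hmono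
  have hlhs : ∫⁻ β in Ioo (0:ℝ) 1, ENNReal.ofReal (-(g β))
      = ∫⁻ β in Ioo (0:ℝ) 1, ENNReal.ofReal (f β) := by
    apply lintegral_congr
    intro β
    rcases le_total (-(g β)) 0 with h|h
    · rw [show f β = max (-(g β)) 0 from rfl, max_eq_right h,
        ENNReal.ofReal_of_nonpos h, ENNReal.ofReal_zero]
    · rw [show f β = max (-(g β)) 0 from rfl, max_eq_left h]
  have key_lt := lintegral_eq_lintegral_meas_lt (f := f) (volume.restrict (Ioo (0:ℝ) 1))
    (Eventually.of_forall fun β => le_max_right _ _) hfm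
  have key_le := lintegral_eq_lintegral_meas_le (f := f) (volume.restrict (Ioo (0:ℝ) 1))
    (Eventually.of_forall fun β => le_max_right _ _) hfm
  have claim1 : ∀ s ∈ Ioi (0:ℝ),
      (volume.restrict (Ioo (0:ℝ) 1)) {β | s < f β} ≤ 1 - F P X (-s) := by
    intro s hs
    have hs0 : (0:ℝ) < s := hs
    rw [Measure.restrict_apply' measurableSet_Ioo]
    have hsub : {β | s < f β} ∩ Ioo (0:ℝ) 1 ⊆ Ico ((F P X (-s)).toReal) 1 := by
      rintro β ⟨hβf, hβ0, hβ1⟩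
      have h1 : s < -(g β) := by
        rcases lt_max_iff.mp (show s < max (-(g β)) 0 from hβf) with h|h
        · exact h
        · linarith
      have h2 : g β < -s := by linarith
      have h3 : F P X (-s) ≤ ENNReal.ofReal β := by
        by_contra hc
        push_neg at hc
        have := le_sInf_S P X hX hβ0 hc
        linarith [this]
      refine ⟨?_, hβ1⟩
      calc (F P X (-s)).toReal ≤ (ENNReal.ofReal β).toReal :=
            ENNReal.toReal_mono ENNReal.ofReal_ne_top h3
        _ = β := ENNReal.toReal_ofReal hβ0.le
    calc volume ({β | s < f β} ∩ Ioo (0:ℝ) 1) ≤ volume (Ico ((F P X (-s)).toReal) 1) :=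
          measure_mono hsub
      _ = ENNReal.ofReal (1 - (F P X (-s)).toReal) := Real.volume_Ico
      _ = ENNReal.ofReal 1 - ENNReal.ofReal ((F P X (-s)).toReal) :=
          ENNReal.ofReal_sub _ ENNReal.toReal_nonneg
      _ = 1 - F P X (-s) := by
          rw [ENNReal.ofReal_one, ENNReal.ofReal_toReal (F_ne_top P X _)]
  have claim2 : ∀ s ∈ Ioi (0:ℝ),
      1 - F P X (-s) ≤ (volume.restrict (Ioo (0:ℝ) 1)) {β | s ≤ f β} := by
    intro s hs
    have hs0 : (0:ℝ) < s := hs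
    rw [Measure.restrict_apply' measurableSet_Ioo]
    have hr1 : (F P X (-s)).toReal ≤ 1 := by
      have : F P X (-s) ≤ 1 := prob_le_one
      simpa using ENNReal.toReal_mono ENNReal.one_ne_top this
    have hsub : Ioo ((F P X (-s)).toReal) 1 ⊆ {β | s ≤ f β} ∩ Ioo (0:ℝ) 1 := by
      rintro β ⟨hβr, hβ1⟩
      have hβ0 : (0:ℝ) < β := lt_of_le_of_lt ENNReal.toReal_nonneg hβr
      have h3 : F P X (-s) ≤ ENNReal.ofReal β := by
        rw [← ENNReal.ofReal_toReal (F_ne_top P X (-s))]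
        exact ENNReal.ofReal_le_ofReal hβr.le
      have h4 : g β ≤ -s := sInf_S_le P X hX hβ1 h3
      have h5 : s ≤ f β := le_trans (show s ≤ -(g β) by linarith) (le_max_left _ _)
      exact ⟨h5, hβ0, hβ1⟩
    calc 1 - F P X (-s)
        = ENNReal.ofReal (1 - (F P X (-s)).toReal) := by
          rw [ENNReal.ofReal_sub _ ENNReal.toReal_nonneg, ENNReal.ofReal_one,
            ENNReal.ofReal_toReal (F_ne_top P X _)]
      _ = volume (Ioo ((F P X (-s)).toReal) 1) := Real.volume_Ioo.symm
      _ ≤ volume ({β | s ≤ f β} ∩ Ioo (0:ℝ) 1) := measure_mono hsub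
  have hmid : ∫⁻ β in Ioo (0:ℝ) 1, ENNReal.ofReal (f β)
      = ∫⁻ s in Ioi (0:ℝ), (1 - F P X (-s)) := by
    refine le_antisymm ?_ ?_
    · rw [key_lt]
      exact lintegral_mono_ae
        ((ae_restrict_iff' measurableSet_Ioi).mpr (Eventually.of_forall claim1))
    · rw [key_le]
      exact lintegral_mono_ae
        ((ae_restrict_iff' measurableSet_Ioi).mpr (Eventually.of_forall claim2))
  have hm : Measurable (fun ω => max (X ω) 0) := hX.max measurable_const
  have keyP := lintegral_eq_lintegral_meas_le (f := fun ω => max (X ω) 0) P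
    (Eventually.of_forall fun ω => le_max_right _ _) hm.aemeasurable
  have hTP : ∫⁻ s in Ioi (0:ℝ), (1 - F P X (-s))
      = ∫⁻ s in Ioi (0:ℝ), P {ω | s ≤ max (X ω) 0} := by
    refine setLIntegral_congr_fun measurableSet_Ioi (fun s hs => ?_)
    have hs0 : (0:ℝ) < s := hs
    have hcompl : {ω | s ≤ max (X ω) 0} = {ω | X ω + -s < 0}ᶜ := by
      ext ω
      simp only [mem_setOf_eq, mem_compl_iff, not_lt, le_max_iff]
      constructor
      · rintro (h|h)
        · linarith
        · linarith
      · intro h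
        left
        linarith
    rw [hcompl, prob_compl_eq_one_sub (measurableSet_lt (hX.add_const _) measurable_const)]
    rfl
  rw [hlhs, hmid, hTP]
  exact keyP.symm


/-- The dual set of expectations. -/
def D (P : Measure Ω) (X : Ω → ℝ) (αr : ℝ) : Set ℝ :=
  {v : ℝ | ∃ Y : Ω → ℝ, Measurable Y ∧ (∀ᵐ ω ∂P, 0 ≤ Y ω) ∧
    (∀ᵐ ω ∂P, Y ω ≤ 1 / αr) ∧ (∫ ω, Y ω ∂P) = 1 ∧ v = ∫ ω, (-X ω) * Y ω ∂P}

lemma upper_bound (hXi : Integrable X P) {αr : ℝ} (hα0 : 0 < αr) (t₀ : ℝ) :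
    ∀ v ∈ D P X αr, v ≤ t₀ + (1 / αr) * ∫ ω, max (-X ω - t₀) 0 ∂P := by
  rintro v ⟨Y, mY, hY0, hY1, hYint, rfl⟩
  have hm_int : Integrable (fun ω => max (-X ω - t₀) 0) P :=
    (hXi.neg.sub (integrable_const t₀)).pos_part
  have hYb : ∀ᵐ ω ∂P, ‖Y ω‖ ≤ 1 / αr := by
    filter_upwards [hY0, hY1] with ω h0 h1
    rwa [Real.norm_of_nonneg h0]
  have intY : Integrable Y P :=
    Integrable.mono' (integrable_const (1 / αr)) mY.aestronglyMeasurable hYb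
  have hsm : AEStronglyMeasurable (fun ω => (-X ω - t₀) * Y ω) P := by
    exact (hXi.aestronglyMeasurable.neg.sub aestronglyMeasurable_const).mul
      mY.aestronglyMeasurable
  have intXY : Integrable (fun ω => (-X ω - t₀) * Y ω) P := by
    apply Integrable.mono' ((hXi.abs.add (integrable_const |t₀|)).mul_const (1 / αr)) hsm
    filter_upwards [hYb] with ω hb
    show ‖(-X ω - t₀) * Y ω‖ ≤ (|X ω| + |t₀|) * (1 / αr)
    rw [norm_mul]
    refine mul_le_mul ?_ hb (norm_nonneg _) (by positivity)
    have h1 : -X ω - t₀ = -(X ω + t₀) := by ring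
    rw [Real.norm_eq_abs, h1, abs_neg]
    calc |X ω + t₀| ≤ |X ω| + |t₀| := abs_add_le _ _
      _ = |X ω| + |t₀| := rfl
  have hsplit : (fun ω => (-X ω) * Y ω) = fun ω => (-X ω - t₀) * Y ω + t₀ * Y ω :=
    funext fun ω => by ring
  have hmono : ∫ ω, (-X ω - t₀) * Y ω ∂P ≤ ∫ ω, (1 / αr) * max (-X ω - t₀) 0 ∂P := by
    refine integral_mono_ae intXY (hm_int.const_mul _) ?_
    filter_upwards [hY0, hY1] with ω h0 h1
    rcases le_or_gt (-X ω - t₀) 0 with h | h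
    · have h2 : (-X ω - t₀) * Y ω ≤ 0 := mul_nonpos_of_nonpos_of_nonneg h h0
      have h3 : 0 ≤ (1 / αr) * max (-X ω - t₀) 0 :=
        mul_nonneg (by positivity) (le_max_right _ _)
      linarith
    · rw [max_eq_left h.le]
      calc (-X ω - t₀) * Y ω ≤ (-X ω - t₀) * (1 / αr) :=
            mul_le_mul_of_nonneg_left h1 h.le
        _ = (1 / αr) * (-X ω - t₀) := mul_comm _ _
  calc ∫ ω, (-X ω) * Y ω ∂P
      = ∫ ω, ((-X ω - t₀) * Y ω + t₀ * Y ω) ∂P := by rw [hsplit]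
    _ = (∫ ω, (-X ω - t₀) * Y ω ∂P) + t₀ * ∫ ω, Y ω ∂P := by
        rw [integral_add intXY (intY.const_mul t₀), integral_const_mul]
    _ = (∫ ω, (-X ω - t₀) * Y ω ∂P) + t₀ := by rw [hYint, mul_one]
    _ ≤ (∫ ω, (1 / αr) * max (-X ω - t₀) 0 ∂P) + t₀ := by linarith [hmono]
    _ = t₀ + (1 / αr) * ∫ ω, max (-X ω - t₀) 0 ∂P := by
        rw [integral_const_mul]; ring

lemma opt_mem (hX : Measurable X) (hXi : Integrable X P) {αr : ℝ} (hα0 : 0 < αr) (t₀ : ℝ)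
    (hA : P {ω | X ω + t₀ < 0} ≤ ENNReal.ofReal αr)
    (hAB : ENNReal.ofReal αr ≤ P {ω | X ω + t₀ ≤ 0}) :
    t₀ + (1 / αr) * ∫ ω, max (-X ω - t₀) 0 ∂P ∈ D P X αr := by
  have hm_int : Integrable (fun ω => max (-X ω - t₀) 0) P :=
    (hXi.neg.sub (integrable_const t₀)).pos_part
  set A := {ω | X ω + t₀ < 0} with hAdef
  set B := {ω | X ω + t₀ = 0} with hBdef
  have hAm : MeasurableSet A := measurableSet_lt (hX.add_const t₀) measurable_const
  have hBm : MeasurableSet B := measurableSet_eq_fun (hX.add_const t₀) measurable_const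
  have hdisj : Disjoint A B := Set.disjoint_left.mpr fun ω hωA hωB =>
    absurd (show X ω + t₀ = 0 from hωB) (ne_of_lt (show X ω + t₀ < 0 from hωA))
  set a := (P A).toReal with hadef
  set b := (P B).toReal with hbdef
  have haα : a ≤ αr := ENNReal.toReal_le_of_le_ofReal hα0.le hA
  have hunion : {ω | X ω + t₀ ≤ 0} = A ∪ B := by
    ext ω
    simp only [hAdef, hBdef, mem_setOf_eq, mem_union]
    exact le_iff_lt_or_eq
  have hab : αr ≤ a + b := by
    have h1 : P (A ∪ B) = P A + P B := measure_union hdisj hBm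
    have h2 : ENNReal.ofReal αr ≤ P A + P B := by
      rw [← h1, ← hunion]; exact hAB
    have h3 := ENNReal.toReal_mono
      (by exact ENNReal.add_ne_top.mpr ⟨measure_ne_top P A, measure_ne_top P B⟩) h2
    rwa [ENNReal.toReal_ofReal hα0.le,
      ENNReal.toReal_add (measure_ne_top P A) (measure_ne_top P B)] at h3
  have hb0 : 0 ≤ b := ENNReal.toReal_nonneg
  set c := if b = 0 then (0:ℝ) else (αr - a) / b with hcdef
  have hc0 : 0 ≤ c := by
    rw [hcdef]; split_ifs with h
    · exact le_rfl
    · exact div_nonneg (by linarith) hb0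
  have hc1 : c ≤ 1 := by
    rw [hcdef]; split_ifs with h
    · exact zero_le_one
    · rw [div_le_one (lt_of_le_of_ne hb0 (Ne.symm h))]
      linarith
  have hsum : a + c * b = αr := by
    rw [hcdef]; split_ifs with h
    · rw [zero_mul, add_zero]
      have := hab
      rw [h, add_zero] at this
      linarith
    · rw [div_mul_cancel₀ _ h]; ring
  set Y := fun ω => (1 / αr) * (A.indicator (fun _ => (1:ℝ)) ω
    + c * B.indicator (fun _ => (1:ℝ)) ω) with hYdef
  have mY : Measurable Y :=
    (((measurable_const.indicator hAm)).add
      ((measurable_const.indicator hBm).const_mul c)).const_mul (1 / αr)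
  have hY0 : ∀ ω, 0 ≤ Y ω := fun ω =>
    mul_nonneg (by positivity)
      (add_nonneg (indicator_nonneg (fun _ _ => zero_le_one) ω)
        (mul_nonneg hc0 (indicator_nonneg (fun _ _ => zero_le_one) ω)))
  have hY1 : ∀ ω, Y ω ≤ 1 / αr := by
    intro ω
    have hle : A.indicator (fun _ => (1:ℝ)) ω + c * B.indicator (fun _ => (1:ℝ)) ω ≤ 1 := by
      by_cases hωA : ω ∈ A
      · have hωB : ω ∉ B := Set.disjoint_left.mp hdisj hωA
        rw [indicator_of_mem hωA, indicator_of_notMem hωB, mul_zero, add_zero]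
      · by_cases hωB : ω ∈ B
        · rw [indicator_of_notMem hωA, indicator_of_mem hωB, mul_one, zero_add]
          exact hc1
        · rw [indicator_of_notMem hωA, indicator_of_notMem hωB, mul_zero, add_zero]
          exact zero_le_one
    calc Y ω ≤ (1 / αr) * 1 := mul_le_mul_of_nonneg_left hle (by positivity)
      _ = 1 / αr := mul_one _
  have int_indA : Integrable (A.indicator fun _ => (1:ℝ)) P := (integrable_const 1).indicator hAm
  have int_indB : Integrable (B.indicator fun _ => (1:ℝ)) P := (integrable_const 1).indicator hBm
  have hIA : ∫ ω, A.indicator (fun _ => (1:ℝ)) ω ∂P = a := by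
    rw [integral_indicator_const (1:ℝ) hAm]; simp [hadef, measureReal_def]
  have hIB : ∫ ω, B.indicator (fun _ => (1:ℝ)) ω ∂P = b := by
    rw [integral_indicator_const (1:ℝ) hBm]; simp [hbdef, measureReal_def]
  have intY : Integrable Y P := (int_indA.add (int_indB.const_mul c)).const_mul (1 / αr)
  have hYint : ∫ ω, Y ω ∂P = 1 := by
    rw [hYdef]
    rw [integral_const_mul, integral_add int_indA (int_indB.const_mul c),
      integral_const_mul, hIA, hIB, hsum]
    field_simp
  have key : ∀ ω, (-X ω - t₀) * Y ω = (1 / αr) * max (-X ω - t₀) 0 := by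
    intro ω
    by_cases hωA : ω ∈ A
    · have hωB : ω ∉ B := Set.disjoint_left.mp hdisj hωA
      have h1 : 0 < -X ω - t₀ := by
        have : X ω + t₀ < 0 := hωA
        linarith
      rw [hYdef]
      simp only [indicator_of_mem hωA, indicator_of_notMem hωB, mul_zero, add_zero]
      rw [max_eq_left h1.le]
      ring
    · by_cases hωB : ω ∈ B
      · have h0 : X ω + t₀ = 0 := hωB
        have h1 : -X ω - t₀ = 0 := by linarith
        rw [h1, zero_mul, max_eq_right le_rfl, mul_zero]
      · have h1 : ¬(X ω + t₀ < 0) := hωA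
        have h2 : -X ω - t₀ ≤ 0 := by
          have := not_lt.mp h1
          linarith
        rw [hYdef]
        simp only [indicator_of_notMem hωA, indicator_of_notMem hωB, mul_zero, add_zero,
          mul_zero, zero_add]
        rw [max_eq_right h2]
        ring
  refine ⟨Y, mY, Eventually.of_forall hY0, Eventually.of_forall hY1, hYint, ?_⟩
  have e1 : (fun ω => (-X ω) * Y ω)
      = fun ω => (1 / αr) * max (-X ω - t₀) 0 + t₀ * Y ω := by
    funext ω
    have : (-X ω) * Y ω = (-X ω - t₀) * Y ω + t₀ * Y ω := by ring
    rw [this, key ω]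
  rw [e1, integral_add (hm_int.const_mul _) (intY.const_mul t₀), integral_const_mul,
    integral_const_mul, hYint, mul_one, add_comm]


lemma integral_eq_of_lintegral {f : Ω → ℝ} (hf : Integrable f P) (hnn : ∀ ω, 0 ≤ f ω) :
    ∫ ω, f ω ∂P = (∫⁻ ω, ENNReal.ofReal (f ω) ∂P).toReal :=
  integral_eq_lintegral_of_nonneg_ae (Eventually.of_forall hnn) hf.aestronglyMeasurable

lemma main_lt (hX : Measurable X) (hXi : Integrable X P) {αr : ℝ}
    (hα0 : 0 < αr) (hα1 : αr < 1) :
    (1 / αr) * ∫ β in Ioo (0:ℝ) αr, sInf (S P X β) = sSup (D P X αr) := by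
  set t₀ := sInf (S P X αr) with ht₀
  set m := fun ω => max (-X ω - t₀) 0 with hm
  have hm_int : Integrable m P := (hXi.neg.sub (integrable_const t₀)).pos_part
  set V := t₀ + (1 / αr) * ∫ ω, m ω ∂P with hV
  have hF : ∀ u, t₀ < u → F P X u ≤ ENNReal.ofReal αr := fun u hu =>
    F_le_of_sInf_lt P X hX hα0 hα1 hu
  have key := lintegral_sub_eq P X hX hα0 hα1.le t₀ hF
  have hfin : ∫⁻ ω, ENNReal.ofReal (m ω) ∂P ≠ ⊤ :=
    ((hasFiniteIntegral_iff_ofReal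
      (Eventually.of_forall fun ω => le_max_right _ _)).mp hm_int.2).ne
  have hganti : ∀ β ∈ Ioo (0:ℝ) αr, t₀ ≤ sInf (S P X β) := fun β hβ =>
    sInf_S_anti P X hX hβ.1 hα1 hβ.2.le
  have hanti : AntitoneOn (fun β => sInf (S P X β) - t₀) (Ioo 0 αr) := by
    intro β hβ β' hβ' hle
    exact sub_le_sub_right (sInf_S_anti P X hX hβ.1 (lt_of_lt_of_le hβ'.2 hα1.le) hle) _
  have hgm : AEMeasurable (fun β => sInf (S P X β) - t₀) (volume.restrict (Ioo 0 αr)) :=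
    aemeasurable_restrict_of_antitoneOn measurableSet_Ioo hanti
  have hnn : 0 ≤ᵐ[volume.restrict (Ioo 0 αr)] (fun β => sInf (S P X β) - t₀) :=
    (ae_restrict_iff' measurableSet_Ioo).mpr
      (Eventually.of_forall fun β hβ => sub_nonneg.mpr (hganti β hβ))
  have hint1 : IntegrableOn (fun β => sInf (S P X β) - t₀) (Ioo 0 αr) volume := by
    refine ⟨hgm.aestronglyMeasurable, ?_⟩
    rw [hasFiniteIntegral_iff_ofReal hnn, key]
    exact hfin.lt_top
  have hval1 : ∫ β in Ioo (0:ℝ) αr, (sInf (S P X β) - t₀) = ∫ ω, m ω ∂P := by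
    rw [integral_eq_lintegral_of_nonneg_ae hnn hgm.aestronglyMeasurable, key,
      integral_eq_of_lintegral P hm_int (fun ω => le_max_right _ _)]
  have hconst : IntegrableOn (fun _ : ℝ => t₀) (Ioo 0 αr) volume :=
    integrableOn_const measure_Ioo_lt_top.ne
  have hint2 : IntegrableOn (fun β => sInf (S P X β)) (Ioo 0 αr) volume := by
    have h : (fun β => sInf (S P X β)) = fun β => (sInf (S P X β) - t₀) + t₀ :=
      funext fun β => by ring
    rw [h]
    exact hint1.add hconst
  have hvol : ∫ β in Ioo (0:ℝ) αr, (t₀ : ℝ) = αr * t₀ := by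
    rw [setIntegral_const, measureReal_def, Real.volume_Ioo, sub_zero, ENNReal.toReal_ofReal hα0.le,
      smul_eq_mul]
  have hval2 : ∫ β in Ioo (0:ℝ) αr, sInf (S P X β) = αr * t₀ + ∫ ω, m ω ∂P := by
    have h := integral_sub hint2 hconst
    rw [hvol] at h
    have h2 : (fun β => sInf (S P X β) - t₀) = fun β => sInf (S P X β) - t₀ := rfl
    rw [← hval1]
    have := h
    linarith [h, hval1]
  have hVeq : (1 / αr) * (αr * t₀ + ∫ ω, m ω ∂P) = V := by
    rw [hV]
    field_simp
  have hub : ∀ v ∈ D P X αr, v ≤ V := upper_bound P X hXi hα0 t₀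
  have hmem : V ∈ D P X αr := by
    refine opt_mem P X hX hXi hα0 t₀ ?_ ?_
    · exact F_le_self P X hX hF
    · exact le_prob_le P X hX (fun t ht => lt_F_of_lt_sInf P X hX hα1 ht)
  rw [hval2, hVeq]
  exact (le_antisymm (csSup_le ⟨V, hmem⟩ hub) (le_csSup ⟨V, hub⟩ hmem)).symm

lemma main_one (hX : Measurable X) (hXi : Integrable X P) :
    (1 / (1:ℝ)) * ∫ β in Ioo (0:ℝ) 1, sInf (S P X β) = sSup (D P X 1) := by
  -- the dual set is the singleton {∫ -X}
  have hDset : D P X 1 = {∫ ω, -X ω ∂P} := by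
    ext v
    simp only [mem_singleton_iff]
    constructor
    · rintro ⟨Y, mY, hY0, hY1, hYint, rfl⟩
      have hY1' : ∀ᵐ ω ∂P, Y ω ≤ 1 := by
        filter_upwards [hY1] with ω h
        simpa using h
      have hYb : ∀ᵐ ω ∂P, ‖Y ω‖ ≤ 1 := by
        filter_upwards [hY0, hY1'] with ω h0 h1
        rwa [Real.norm_of_nonneg h0]
      have intY : Integrable Y P :=
        Integrable.mono' (integrable_const 1) mY.aestronglyMeasurable hYb
      have hsub : Integrable (fun ω => 1 - Y ω) P := (integrable_const 1).sub intY
      have hzero : ∫ ω, (1 - Y ω) ∂P = 0 := by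
        rw [integral_sub (integrable_const 1) intY, hYint]
        simp
      have hae : (fun ω => 1 - Y ω) =ᵐ[P] 0 := by
        refine (integral_eq_zero_iff_of_nonneg_ae ?_ hsub).mp hzero
        filter_upwards [hY1'] with ω h1
        simpa using h1
      have hYone : Y =ᵐ[P] fun _ => (1:ℝ) := by
        filter_upwards [hae] with ω h
        have : 1 - Y ω = 0 := h
        linarith
      refine integral_congr_ae ?_
      filter_upwards [hYone] with ω h
      rw [h, mul_one]
    · rintro rfl
      refine ⟨fun _ => 1, measurable_const, Eventually.of_forall fun _ => zero_le_one,
        Eventually.of_forall fun _ => by norm_num, by simp, ?_⟩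
      simp
  -- value of the integral
  have hF : ∀ u, (0:ℝ) < u → F P X u ≤ ENNReal.ofReal 1 := fun u _ => by
    rw [ENNReal.ofReal_one]
    exact prob_le_one
  have keyP := lintegral_sub_eq P X hX one_pos le_rfl 0 hF
  have keyN := lintegral_neg_eq P X hX
  simp only [sub_zero] at keyP
  have hpos_int : Integrable (fun ω => max (-X ω - 0) 0) P :=
    (hXi.neg.sub (integrable_const 0)).pos_part
  have hpos_int' : Integrable (fun ω => max (-X ω) 0) P := by
    simpa using hpos_int
  have hneg_int : Integrable (fun ω => max (X ω) 0) P := hXi.pos_part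
  have hfinP : ∫⁻ ω, ENNReal.ofReal (max (-X ω) 0) ∂P ≠ ⊤ :=
    ((hasFiniteIntegral_iff_ofReal
      (Eventually.of_forall fun ω => le_max_right _ _)).mp hpos_int'.2).ne
  have hfinN : ∫⁻ ω, ENNReal.ofReal (max (X ω) 0) ∂P ≠ ⊤ :=
    ((hasFiniteIntegral_iff_ofReal
      (Eventually.of_forall fun ω => le_max_right _ _)).mp hneg_int.2).ne
  have keyP' : ∫⁻ β in Ioo (0:ℝ) 1, ENNReal.ofReal (sInf (S P X β))
      = ∫⁻ ω, ENNReal.ofReal (max (-X ω) 0) ∂P := keyP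
  have hanti : AntitoneOn (fun β => sInf (S P X β)) (Ioo 0 1) := by
    intro β hβ β' hβ' hle
    exact sInf_S_anti P X hX hβ.1 hβ'.2 hle
  have hgm : AEMeasurable (fun β => sInf (S P X β)) (volume.restrict (Ioo (0:ℝ) 1)) :=
    aemeasurable_restrict_of_antitoneOn measurableSet_Ioo hanti
  have hint : IntegrableOn (fun β => sInf (S P X β)) (Ioo (0:ℝ) 1) volume := by
    refine ⟨hgm.aestronglyMeasurable, ?_⟩
    unfold HasFiniteIntegral
    calc ∫⁻ β in Ioo (0:ℝ) 1, ‖sInf (S P X β)‖₊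
        ≤ ∫⁻ β in Ioo (0:ℝ) 1,
            (ENNReal.ofReal (sInf (S P X β)) + ENNReal.ofReal (-(sInf (S P X β)))) := by
          apply lintegral_mono
          intro β
          show (‖sInf (S P X β)‖₊ : ℝ≥0∞)
            ≤ ENNReal.ofReal (sInf (S P X β)) + ENNReal.ofReal (-sInf (S P X β))
          rcases le_total 0 (sInf (S P X β)) with h|h
          · have hx : (‖sInf (S P X β)‖₊ : ℝ≥0∞) = ENNReal.ofReal (sInf (S P X β)) :=
              Real.enorm_eq_ofReal h
            rw [hx]
            exact le_self_add
          · have hx : (‖sInf (S P X β)‖₊ : ℝ≥0∞) = ENNReal.ofReal (-(sInf (S P X β))) := by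
              rw [← nnnorm_neg]
              exact Real.enorm_eq_ofReal (neg_nonneg.mpr h)
            rw [hx]
            exact le_add_self
      _ = (∫⁻ β in Ioo (0:ℝ) 1, ENNReal.ofReal (sInf (S P X β)))
            + ∫⁻ β in Ioo (0:ℝ) 1, ENNReal.ofReal (-(sInf (S P X β))) := by
          apply lintegral_add_left'
          exact hgm.ennreal_ofReal
      _ < ⊤ := by
          rw [keyP', keyN]
          exact ENNReal.add_lt_top.mpr ⟨hfinP.lt_top, hfinN.lt_top⟩
  have hval : ∫ β in Ioo (0:ℝ) 1, sInf (S P X β) = ∫ ω, -X ω ∂P := by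
    rw [integral_eq_lintegral_pos_part_sub_lintegral_neg_part hint, keyP', keyN,
      ← integral_eq_of_lintegral P hpos_int' (fun ω => le_max_right _ _),
      ← integral_eq_of_lintegral P hneg_int (fun ω => le_max_right _ _),
      ← integral_sub hpos_int' hneg_int]
    apply integral_congr_ae
    refine Eventually.of_forall fun ω => ?_
    show max (-X ω) 0 - max (X ω) 0 = -X ω
    rcases le_total 0 (X ω) with h|h
    · rw [max_eq_right (by linarith), max_eq_left h]
      ring
    · rw [max_eq_left (by linarith), max_eq_right h]
      ring
  rw [hval, hDset, csSup_singleton]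
  norm_num

end AVaRAux

end Aux

/-- Dual representation of the Average-Value-at-Risk:
`AV@R_α(X) = sup { E^Q[-X] | Q ≪ P, dQ/dP ≤ 1/α }`, where `Q` is described by
its density `Y = dQ/dP`. -/
theorem avaR_dual_representation (P : Measure Ω) [IsProbabilityMeasure P]
    (α : ℝ) (hα0 : 0 < α) (hα1 : α ≤ 1) (X : Ω → ℝ) (hX : Integrable X P) :
    AVaR P α X =
      sSup {v : ℝ | ∃ Y : Ω → ℝ, Measurable Y ∧ (∀ᵐ ω ∂P, 0 ≤ Y ω) ∧
        (∀ᵐ ω ∂P, Y ω ≤ 1 / α) ∧ (∫ ω, Y ω ∂P) = 1 ∧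
        v = ∫ ω, (-X ω) * Y ω ∂P} := by
  obtain ⟨X', hX'm, hXX'⟩ : ∃ X' : Ω → ℝ, Measurable X' ∧ X =ᵐ[P] X' :=
    ⟨hX.1.aemeasurable.mk X, hX.1.aemeasurable.measurable_mk, hX.1.aemeasurable.ae_eq_mk⟩
  have hXi' : Integrable X' P := hX.congr hXX'
  have hPM : ∀ t : ℝ, P {ω | X ω + t < 0} = P {ω | X' ω + t < 0} := fun t =>
    measure_congr (Filter.eventuallyEq_set.mpr (by
      filter_upwards [hXX'] with ω h
      simp only [mem_setOf_eq, h]))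
  have hAV : AVaR P α X = (1 / α) * ∫ β in Ioo (0 : ℝ) α, sInf (AVaRAux.S P X' β) := by
    unfold AVaR realVaR
    congr 1
    have hfun : (fun β : ℝ => sInf {t : ℝ | P {ω | X ω + t < 0} ≤ ENNReal.ofReal β})
        = fun β : ℝ => sInf (AVaRAux.S P X' β) := by
      funext β
      congr 1
      ext t
      simp only [AVaRAux.S, AVaRAux.F, mem_setOf_eq, hPM t]
    rw [hfun]
  have hD : {v : ℝ | ∃ Y : Ω → ℝ, Measurable Y ∧ (∀ᵐ ω ∂P, 0 ≤ Y ω) ∧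
        (∀ᵐ ω ∂P, Y ω ≤ 1 / α) ∧ (∫ ω, Y ω ∂P) = 1 ∧
        v = ∫ ω, (-X ω) * Y ω ∂P} = AVaRAux.D P X' α := by
    ext v
    simp only [AVaRAux.D, mem_setOf_eq]
    constructor
    · rintro ⟨Y, h1, h2, h3, h4, h5⟩
      exact ⟨Y, h1, h2, h3, h4, h5.trans (integral_congr_ae (by
        filter_upwards [hXX'] with ω h
        rw [h]))⟩
    · rintro ⟨Y, h1, h2, h3, h4, h5⟩
      exact ⟨Y, h1, h2, h3, h4, h5.trans (integral_congr_ae (by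
        filter_upwards [hXX'] with ω h
        rw [h]))⟩
  rcases eq_or_lt_of_le hα1 with heq | hlt
  · subst heq
    calc AVaR P 1 X = (1 / (1:ℝ)) * ∫ β in Ioo (0 : ℝ) 1, sInf (AVaRAux.S P X' β) := hAV
      _ = sSup (AVaRAux.D P X' 1) := AVaRAux.main_one P X' hX'm hXi'
      _ = _ := by rw [hD]
  · calc AVaR P α X = (1 / α) * ∫ β in Ioo (0 : ℝ) α, sInf (AVaRAux.S P X' β) := hAV
      _ = sSup (AVaRAux.D P X' α) := AVaRAux.main_lt P X' hX'm hXi' hα0 hlt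
      _ = _ := by rw [hD]
end

section
/- For integrable random variables X, Y ∈ L^1, X dominates Y in second-order stochastic dominance sense if and only if AV@R_α(X) ≤ AV@R_α(Y) for all α ∈ (0,1] (equivalently: Y ⪯_SSD X iff AV@R_α(Y) ≥ AV@R_α(X) for all α ∈ (0,1]). -/
open MeasureTheory Set Filter Topology
open scoped ENNReal

variable {Ω : Type*} [MeasurableSpace Ω]

namespace SSDProof

/-- The (upper) quantile function. -/
noncomputable def qf (P : Measure Ω) (W : Ω → ℝ) (u : ℝ) : ℝ :=
  sSup {s : ℝ | P {ω | W ω < s} ≤ ENNReal.ofReal u}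

lemma realVaR_eq_neg_qf (P : Measure Ω) (β : ℝ) (X : Ω → ℝ) :
    realVaR P β X = -qf P X β := by
  rw [realVaR, qf, Real.sInf_def]
  congr 2
  ext x
  simp only [Set.mem_neg, mem_setOf_eq]
  have : {ω | X ω + -x < 0} = {ω | X ω < x} := by
    ext ω; simp only [mem_setOf_eq]; constructor <;> intro h <;> linarith
  rw [this]

variable {P : Measure Ω} [IsProbabilityMeasure P] {W : Ω → ℝ}

lemma meas_lt_mono {r r' : ℝ} (h : r ≤ r') :
    P {ω | W ω < r} ≤ P {ω | W ω < r'} :=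
  measure_mono fun ω hω => lt_of_lt_of_le hω h

lemma qSet_nonempty (hW : Measurable W) {u : ℝ} (hu : 0 < u) :
    {s : ℝ | P {ω | W ω < s} ≤ ENNReal.ofReal u}.Nonempty := by
  have h1 : Tendsto (fun n : ℕ => P {ω | W ω < -(n : ℝ)}) atTop
      (𝓝 (P (⋂ n : ℕ, {ω | W ω < -(n : ℝ)}))) := by
    apply tendsto_measure_iInter_atTop
    · exact fun n => (hW measurableSet_Iio).nullMeasurableSet
    · intro m n hmn ω hω
      simp only [mem_setOf_eq] at hω ⊢
      have : -(n : ℝ) ≤ -(m : ℝ) := by exact_mod_cast neg_le_neg (by exact_mod_cast hmn)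
      linarith
    · exact ⟨0, measure_ne_top _ _⟩
  have h2 : (⋂ n : ℕ, {ω | W ω < -(n : ℝ)}) = ∅ := by
    ext ω
    simp only [mem_iInter, mem_setOf_eq, mem_empty_iff_false, iff_false, not_forall, not_lt]
    obtain ⟨n, hn⟩ := exists_nat_ge (-W ω)
    exact ⟨n, by linarith⟩
  rw [h2, measure_empty] at h1
  have h3 : ∀ᶠ n : ℕ in atTop, P {ω | W ω < -(n : ℝ)} < ENNReal.ofReal u :=
    h1.eventually_lt_const (ENNReal.ofReal_pos.2 hu)
  obtain ⟨n, hn⟩ := h3.exists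
  exact ⟨-(n : ℝ), le_of_lt hn⟩

lemma qSet_bddAbove (hW : Measurable W) {u : ℝ} (hu : u < 1) :
    BddAbove {s : ℝ | P {ω | W ω < s} ≤ ENNReal.ofReal u} := by
  by_contra hb
  have hall : ∀ n : ℕ, P {ω | W ω < (n : ℝ)} ≤ ENNReal.ofReal u := by
    intro n
    obtain ⟨r, hr, hnr⟩ := not_bddAbove_iff.1 hb (n : ℝ)
    exact le_trans (meas_lt_mono (le_of_lt hnr)) hr
  have h1 : Tendsto (fun n : ℕ => P {ω | W ω < (n : ℝ)}) atTop
      (𝓝 (P (⋃ n : ℕ, {ω | W ω < (n : ℝ)}))) := by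
    apply tendsto_measure_iUnion_atTop
    intro m n hmn ω hω
    simp only [mem_setOf_eq] at hω ⊢
    have : (m : ℝ) ≤ (n : ℝ) := by exact_mod_cast hmn
    linarith
  have h2 : (⋃ n : ℕ, {ω | W ω < (n : ℝ)}) = univ := by
    apply eq_univ_of_forall
    intro ω
    obtain ⟨n, hn⟩ := exists_nat_gt (W ω)
    exact mem_iUnion.2 ⟨n, hn⟩
  rw [h2, measure_univ] at h1
  have := le_of_tendsto h1 (Eventually.of_forall hall)
  exact absurd this (not_le.2 (ENNReal.ofReal_lt_one.2 hu))

lemma qf_monoOn (hW : Measurable W) : MonotoneOn (qf P W) (Ioo (0 : ℝ) 1) := by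
  intro u hu v hv huv
  exact csSup_le_csSup (qSet_bddAbove hW hv.2) (qSet_nonempty hW hu.1)
    (fun s hs => le_trans hs (ENNReal.ofReal_le_ofReal huv))

lemma qf_le_of_lt (hW : Measurable W) {u s : ℝ} (hu : u ∈ Ioo (0 : ℝ) 1)
    (h : ENNReal.ofReal u < P {ω | W ω ≤ s}) : qf P W u ≤ s := by
  apply csSup_le (qSet_nonempty hW hu.1)
  intro r hr
  by_contra hrs
  push_neg at hrs
  have hm : P {ω | W ω ≤ s} ≤ P {ω | W ω < r} :=
    measure_mono fun ω hω => lt_of_le_of_lt hω hrs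
  exact absurd (hm.trans hr) (not_le.2 h)

lemma ofReal_le_of_qf_le (hW : Measurable W) {u s : ℝ} (hu : u ∈ Ioo (0 : ℝ) 1)
    (h : qf P W u ≤ s) : ENNReal.ofReal u ≤ P {ω | W ω ≤ s} := by
  have key : ∀ n : ℕ, ENNReal.ofReal u ≤ P {ω | W ω < s + 1 / ((n : ℝ) + 1)} := by
    intro n
    by_contra hc
    push_neg at hc
    have hmem : s + 1 / ((n : ℝ) + 1) ∈
        {s : ℝ | P {ω | W ω < s} ≤ ENNReal.ofReal u} := le_of_lt hc
    have hle := le_csSup (qSet_bddAbove hW hu.2) hmem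
    have hpos : 0 < 1 / ((n : ℝ) + 1) := by positivity
    have : s + 1 / ((n : ℝ) + 1) ≤ s := hle.trans h
    linarith
  have h1 : Tendsto (fun n : ℕ => P {ω | W ω < s + 1 / ((n : ℝ) + 1)}) atTop
      (𝓝 (P (⋂ n : ℕ, {ω | W ω < s + 1 / ((n : ℝ) + 1)}))) := by
    apply tendsto_measure_iInter_atTop
    · exact fun n => (hW measurableSet_Iio).nullMeasurableSet
    · intro m n hmn ω hω
      simp only [mem_setOf_eq] at hω ⊢
      have h1n : 1 / ((n : ℝ) + 1) ≤ 1 / ((m : ℝ) + 1) := by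
        apply one_div_le_one_div_of_le (by positivity)
        linarith [(by exact_mod_cast hmn : (m : ℝ) ≤ n)]
      linarith
    · exact ⟨0, measure_ne_top _ _⟩
  have h2 : (⋂ n : ℕ, {ω | W ω < s + 1 / ((n : ℝ) + 1)}) = {ω | W ω ≤ s} := by
    ext ω
    simp only [mem_iInter, mem_setOf_eq]
    constructor
    · intro hall
      by_contra hgt
      push_neg at hgt
      obtain ⟨n, hn⟩ := exists_nat_one_div_lt (sub_pos.2 hgt)
      have := hall n
      linarith
    · intro hle n
      have : 0 < 1 / ((n : ℝ) + 1) := by positivity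
      linarith
  rw [h2] at h1
  exact ge_of_tendsto h1 (Eventually.of_forall key)

lemma vol_qf_le (hW : Measurable W) (s : ℝ) :
    volume (Ioo (0 : ℝ) 1 ∩ {u | qf P W u ≤ s}) = P {ω | W ω ≤ s} := by
  set a := (P {ω | W ω ≤ s}).toReal with ha
  have hane : P {ω | W ω ≤ s} ≠ ⊤ := measure_ne_top _ _
  have ha0 : 0 ≤ a := ENNReal.toReal_nonneg
  have ha1 : a ≤ 1 := by
    rw [ha]
    calc (P {ω | W ω ≤ s}).toReal ≤ (1 : ℝ≥0∞).toReal :=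
          ENNReal.toReal_mono ENNReal.one_ne_top prob_le_one
      _ = 1 := ENNReal.toReal_one
  apply le_antisymm
  · have hsub : Ioo (0 : ℝ) 1 ∩ {u | qf P W u ≤ s} ⊆ Ioc 0 a := by
      rintro u ⟨hu, hqu⟩
      refine ⟨hu.1, ?_⟩
      have h := ofReal_le_of_qf_le hW hu hqu
      rw [← ENNReal.ofReal_toReal hane, ← ha] at h
      exact (ENNReal.ofReal_le_ofReal_iff ha0).1 h
    calc volume (Ioo (0 : ℝ) 1 ∩ {u | qf P W u ≤ s}) ≤ volume (Ioc (0 : ℝ) a) :=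
          measure_mono hsub
      _ = ENNReal.ofReal a := by rw [Real.volume_Ioc, sub_zero]
      _ = P {ω | W ω ≤ s} := by rw [ha, ENNReal.ofReal_toReal hane]
  · have hsub : Ioo (0 : ℝ) a ⊆ Ioo (0 : ℝ) 1 ∩ {u | qf P W u ≤ s} := by
      rintro u ⟨hu0, hua⟩
      have hu1 : u < 1 := lt_of_lt_of_le hua ha1
      refine ⟨⟨hu0, hu1⟩, qf_le_of_lt hW ⟨hu0, hu1⟩ ?_⟩
      calc ENNReal.ofReal u < ENNReal.ofReal a :=
            (ENNReal.ofReal_lt_ofReal_iff (lt_trans hu0 hua)).2 hua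
        _ = P {ω | W ω ≤ s} := by rw [ha, ENNReal.ofReal_toReal hane]
    calc P {ω | W ω ≤ s} = ENNReal.ofReal a := by rw [ha, ENNReal.ofReal_toReal hane]
      _ = volume (Ioo (0 : ℝ) a) := by rw [Real.volume_Ioo, sub_zero]
      _ ≤ _ := measure_mono hsub

lemma downward_structure {S : Set ℝ} (hS : S ⊆ Ioo (0 : ℝ) 1)
    (hdc : ∀ ⦃u v : ℝ⦄, u ∈ Ioo (0 : ℝ) 1 → v ∈ S → u ≤ v → u ∈ S) (hne : S.Nonempty) :
    ∃ c : ℝ, 0 < c ∧ c ≤ 1 ∧ Ioo (0 : ℝ) c ⊆ S ∧ S ⊆ Ioc (0 : ℝ) c := by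
  have hbdd : BddAbove S := ⟨1, fun x hx => le_of_lt (hS hx).2⟩
  refine ⟨sSup S, ?_, ?_, ?_, ?_⟩
  · obtain ⟨a, ha⟩ := hne
    exact lt_of_lt_of_le (hS ha).1 (le_csSup hbdd ha)
  · exact csSup_le hne fun x hx => le_of_lt (hS hx).2
  · intro u hu
    obtain ⟨v, hv, huv⟩ := exists_lt_of_lt_csSup hne hu.2
    exact hdc ⟨hu.1, lt_trans huv (hS hv).2⟩ hv (le_of_lt huv)
  · exact fun x hx => ⟨(hS hx).1, le_csSup hbdd hx⟩

lemma downward_measurable {S : Set ℝ} (hS : S ⊆ Ioo (0 : ℝ) 1)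
    (hdc : ∀ ⦃u v : ℝ⦄, u ∈ Ioo (0 : ℝ) 1 → v ∈ S → u ≤ v → u ∈ S) :
    MeasurableSet S := by
  rcases S.eq_empty_or_nonempty with h | hne
  · simp [h]
  obtain ⟨c, _, _, h1, h2⟩ := downward_structure hS hdc hne
  have hU : S = Ioo (0 : ℝ) c ∪ (S ∩ {c}) := by
    apply Subset.antisymm
    · intro x hx
      rcases lt_or_eq_of_le (h2 hx).2 with h | h
      · exact Or.inl ⟨(hS hx).1, h⟩
      · exact Or.inr ⟨hx, h⟩
    · rintro x (hx | hx)
      · exact h1 hx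
      · exact hx.1
  rw [hU]
  exact measurableSet_Ioo.union
    ((Set.subsingleton_singleton.anti inter_subset_right).measurableSet)

/-- The truncated quantile function (equal to `qf` on `(0,1)`, `0` elsewhere). -/
noncomputable def Qi (P : Measure Ω) (W : Ω → ℝ) : ℝ → ℝ :=
  (Ioo (0 : ℝ) 1).indicator (qf P W)

lemma Qi_eq_on {u : ℝ} (hu : u ∈ Ioo (0 : ℝ) 1) : Qi P W u = qf P W u :=
  indicator_of_mem hu _

lemma measurable_Qi (hW : Measurable W) : Measurable (Qi P W) := by
  apply measurable_of_Iic
  intro a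
  have hset : Qi P W ⁻¹' Iic a =
      (Ioo (0 : ℝ) 1 ∩ {u | qf P W u ≤ a}) ∪ (if 0 ≤ a then (Ioo (0 : ℝ) 1)ᶜ else ∅) := by
    ext u
    by_cases hu : u ∈ Ioo (0 : ℝ) 1
    · simp only [mem_preimage, mem_Iic, Qi, indicator_of_mem hu, mem_union, mem_inter_iff,
        mem_setOf_eq, hu, true_and]
      split_ifs with h0
      · simp [hu]
      · simp
    · simp only [mem_preimage, mem_Iic, Qi, indicator_of_notMem hu, mem_union, mem_inter_iff,
        mem_setOf_eq, hu, false_and, false_or]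
      split_ifs with h0
      · simp [hu, h0]
      · simp [hu, h0]
  rw [hset]
  have hd : MeasurableSet (Ioo (0 : ℝ) 1 ∩ {u | qf P W u ≤ a}) := by
    apply downward_measurable inter_subset_left
    intro u v hu hv huv
    exact ⟨hu, le_trans (qf_monoOn hW hu hv.1 huv) hv.2⟩
  refine hd.union ?_
  split_ifs
  · exact measurableSet_Ioo.compl
  · exact MeasurableSet.empty

lemma key1 (hW : Measurable W) (t : ℝ) :
    ∫⁻ s in Iic t, P {ω | W ω ≤ s} = ∫⁻ u in Ioo (0 : ℝ) 1, ENNReal.ofReal (t - qf P W u) := by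
  have hQi : Measurable (Qi P W) := measurable_Qi hW
  have hSQ : MeasurableSet {p : ℝ × ℝ | Qi P W p.1 ≤ p.2} :=
    measurableSet_le (hQi.comp measurable_fst) measurable_snd
  have hf : AEMeasurable (Function.uncurry fun u s =>
      ({p : ℝ × ℝ | Qi P W p.1 ≤ p.2}).indicator (fun _ => (1 : ℝ≥0∞)) (u, s))
      ((volume.restrict (Ioo (0 : ℝ) 1)).prod (volume.restrict (Iic t))) := by
    have : Measurable (({p : ℝ × ℝ | Qi P W p.1 ≤ p.2}).indicator (fun _ => (1 : ℝ≥0∞))) :=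
      measurable_const.indicator hSQ
    exact this.aemeasurable
  have swap := lintegral_lintegral_swap hf
  have hL : ∫⁻ u in Ioo (0 : ℝ) 1, ∫⁻ s in Iic t,
      ({p : ℝ × ℝ | Qi P W p.1 ≤ p.2}).indicator (fun _ => (1 : ℝ≥0∞)) (u, s) =
      ∫⁻ u in Ioo (0 : ℝ) 1, ENNReal.ofReal (t - qf P W u) := by
    apply setLIntegral_congr_fun measurableSet_Ioo
    intro u hu
    have hfun : (fun s => ({p : ℝ × ℝ | Qi P W p.1 ≤ p.2}).indicator
        (fun _ => (1 : ℝ≥0∞)) (u, s)) = (Ici (Qi P W u)).indicator (fun _ => (1 : ℝ≥0∞)) := by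
      funext s
      by_cases h : Qi P W u ≤ s
      · rw [indicator_of_mem (by exact h) (fun _ => (1 : ℝ≥0∞)),
          indicator_of_mem (by exact h) (fun _ => (1 : ℝ≥0∞))]
      · rw [indicator_of_notMem (by exact h) (fun _ => (1 : ℝ≥0∞)),
          indicator_of_notMem (by exact h) (fun _ => (1 : ℝ≥0∞))]
    beta_reduce
    rw [hfun, lintegral_indicator_const measurableSet_Ici, one_mul,
      Measure.restrict_apply measurableSet_Ici, Ici_inter_Iic, Real.volume_Icc,
      Qi_eq_on hu]
  have hR : ∫⁻ s in Iic t, ∫⁻ u in Ioo (0 : ℝ) 1,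
      ({p : ℝ × ℝ | Qi P W p.1 ≤ p.2}).indicator (fun _ => (1 : ℝ≥0∞)) (u, s) =
      ∫⁻ s in Iic t, P {ω | W ω ≤ s} := by
    apply lintegral_congr
    intro s
    have hfun : (fun u => ({p : ℝ × ℝ | Qi P W p.1 ≤ p.2}).indicator
        (fun _ => (1 : ℝ≥0∞)) (u, s)) = ({u : ℝ | Qi P W u ≤ s}).indicator
        (fun _ => (1 : ℝ≥0∞)) := by
      funext u
      by_cases h : Qi P W u ≤ s
      · rw [indicator_of_mem (by exact h) (fun _ => (1 : ℝ≥0∞)),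
          indicator_of_mem (by exact h) (fun _ => (1 : ℝ≥0∞))]
      · rw [indicator_of_notMem (by exact h) (fun _ => (1 : ℝ≥0∞)),
          indicator_of_notMem (by exact h) (fun _ => (1 : ℝ≥0∞))]
    have hms : MeasurableSet {u : ℝ | Qi P W u ≤ s} := hQi measurableSet_Iic
    rw [hfun, lintegral_indicator_const hms, one_mul, Measure.restrict_apply hms]
    have hseteq : {u : ℝ | Qi P W u ≤ s} ∩ Ioo (0 : ℝ) 1 =
        Ioo (0 : ℝ) 1 ∩ {u | qf P W u ≤ s} := by
      ext u
      simp only [mem_inter_iff, mem_setOf_eq]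
      constructor
      · rintro ⟨h1, h2⟩; exact ⟨h2, by rwa [Qi_eq_on h2] at h1⟩
      · rintro ⟨h1, h2⟩; exact ⟨by rwa [Qi_eq_on h1], h1⟩
    rw [hseteq, vol_qf_le hW]
  rw [hL, hR] at swap
  exact swap.symm
lemma key2 (hW : Measurable W) (t : ℝ) :
    ∫⁻ u in Ioo (0 : ℝ) 1, ENNReal.ofReal (qf P W u - t) = ∫⁻ s in Ioi t, P {ω | s < W ω} := by
  have hQi : Measurable (Qi P W) := measurable_Qi hW
  have hSQ : MeasurableSet {p : ℝ × ℝ | p.2 < Qi P W p.1} :=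
    measurableSet_lt measurable_snd (hQi.comp measurable_fst)
  have hf : AEMeasurable (Function.uncurry fun u s =>
      ({p : ℝ × ℝ | p.2 < Qi P W p.1}).indicator (fun _ => (1 : ℝ≥0∞)) (u, s))
      ((volume.restrict (Ioo (0 : ℝ) 1)).prod (volume.restrict (Ioi t))) :=
    (measurable_const.indicator hSQ).aemeasurable
  have swap := lintegral_lintegral_swap hf
  have hL : ∫⁻ u in Ioo (0 : ℝ) 1, ∫⁻ s in Ioi t,
      ({p : ℝ × ℝ | p.2 < Qi P W p.1}).indicator (fun _ => (1 : ℝ≥0∞)) (u, s) =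
      ∫⁻ u in Ioo (0 : ℝ) 1, ENNReal.ofReal (qf P W u - t) := by
    apply setLIntegral_congr_fun measurableSet_Ioo
    intro u hu
    have hfun : (fun s => ({p : ℝ × ℝ | p.2 < Qi P W p.1}).indicator
        (fun _ => (1 : ℝ≥0∞)) (u, s)) = (Iio (Qi P W u)).indicator (fun _ => (1 : ℝ≥0∞)) := by
      funext s
      by_cases h : s < Qi P W u
      · rw [indicator_of_mem (by exact h) (fun _ => (1 : ℝ≥0∞)),
          indicator_of_mem (by exact h) (fun _ => (1 : ℝ≥0∞))]
      · rw [indicator_of_notMem (by exact h) (fun _ => (1 : ℝ≥0∞)),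
          indicator_of_notMem (by exact h) (fun _ => (1 : ℝ≥0∞))]
    beta_reduce
    rw [hfun, lintegral_indicator_const measurableSet_Iio, one_mul,
      Measure.restrict_apply measurableSet_Iio, Iio_inter_Ioi, Real.volume_Ioo,
      Qi_eq_on hu]
  have hR : ∫⁻ s in Ioi t, ∫⁻ u in Ioo (0 : ℝ) 1,
      ({p : ℝ × ℝ | p.2 < Qi P W p.1}).indicator (fun _ => (1 : ℝ≥0∞)) (u, s) =
      ∫⁻ s in Ioi t, P {ω | s < W ω} := by
    apply lintegral_congr
    intro s
    have hfun : (fun u => ({p : ℝ × ℝ | p.2 < Qi P W p.1}).indicator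
        (fun _ => (1 : ℝ≥0∞)) (u, s)) = ({u : ℝ | s < Qi P W u}).indicator
        (fun _ => (1 : ℝ≥0∞)) := by
      funext u
      by_cases h : s < Qi P W u
      · rw [indicator_of_mem (by exact h) (fun _ => (1 : ℝ≥0∞)),
          indicator_of_mem (by exact h) (fun _ => (1 : ℝ≥0∞))]
      · rw [indicator_of_notMem (by exact h) (fun _ => (1 : ℝ≥0∞)),
          indicator_of_notMem (by exact h) (fun _ => (1 : ℝ≥0∞))]
    have hms : MeasurableSet {u : ℝ | s < Qi P W u} := measurableSet_lt measurable_const hQi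
    rw [hfun, lintegral_indicator_const hms, one_mul, Measure.restrict_apply hms]
    have hseteq : {u : ℝ | s < Qi P W u} ∩ Ioo (0 : ℝ) 1 =
        Ioo (0 : ℝ) 1 \ (Ioo (0 : ℝ) 1 ∩ {u | qf P W u ≤ s}) := by
      ext u
      simp only [mem_inter_iff, mem_setOf_eq, mem_diff, not_and, not_le]
      constructor
      · rintro ⟨h1, h2⟩
        exact ⟨h2, fun _ => by rwa [Qi_eq_on h2] at h1⟩
      · rintro ⟨h1, h2⟩
        exact ⟨by rw [Qi_eq_on h1]; exact h2 h1, h1⟩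
    have hmsB : MeasurableSet (Ioo (0 : ℝ) 1 ∩ {u : ℝ | qf P W u ≤ s}) :=
      downward_measurable (S := Ioo (0 : ℝ) 1 ∩ {u : ℝ | qf P W u ≤ s}) inter_subset_left
        (fun u v hu hv huv => ⟨hu, le_trans (qf_monoOn hW hu hv.1 huv) hv.2⟩)
    have hfin : volume (Ioo (0 : ℝ) 1 ∩ {u : ℝ | qf P W u ≤ s}) ≠ ⊤ := by
      rw [vol_qf_le hW]; exact measure_ne_top _ _
    have hdiff : volume (Ioo (0 : ℝ) 1 \ (Ioo (0 : ℝ) 1 ∩ {u : ℝ | qf P W u ≤ s})) =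
        volume (Ioo (0 : ℝ) 1) - volume (Ioo (0 : ℝ) 1 ∩ {u : ℝ | qf P W u ≤ s}) :=
      measure_diff inter_subset_left hmsB.nullMeasurableSet hfin
    rw [hseteq, hdiff, vol_qf_le hW, Real.volume_Ioo]
    have hcompl : {ω | s < W ω} = {ω | W ω ≤ s}ᶜ := by
      ext ω; simp [not_le]
    have hms2 : MeasurableSet {ω : Ω | W ω ≤ s} := hW measurableSet_Iic
    rw [hcompl, measure_compl hms2 (measure_ne_top _ _), measure_univ]
    norm_num
  rw [hL, hR] at swap
  exact swap

lemma fin1 (hW : Measurable W) (hWi : Integrable W P) (t : ℝ) :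
    ∫⁻ s in Iic t, P {ω | W ω ≤ s} < ⊤ := by
  have hS : MeasurableSet {p : Ω × ℝ | W p.1 ≤ p.2} :=
    measurableSet_le (hW.comp measurable_fst) measurable_snd
  have hf : AEMeasurable (Function.uncurry fun ω s =>
      ({p : Ω × ℝ | W p.1 ≤ p.2}).indicator (fun _ => (1 : ℝ≥0∞)) (ω, s))
      (P.prod (volume.restrict (Iic t))) :=
    (measurable_const.indicator hS).aemeasurable
  have swap := lintegral_lintegral_swap hf
  have hR : ∫⁻ s in Iic t, ∫⁻ ω, ({p : Ω × ℝ | W p.1 ≤ p.2}).indicator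
      (fun _ => (1 : ℝ≥0∞)) (ω, s) ∂P = ∫⁻ s in Iic t, P {ω | W ω ≤ s} := by
    apply lintegral_congr
    intro s
    have hfun : (fun ω => ({p : Ω × ℝ | W p.1 ≤ p.2}).indicator
        (fun _ => (1 : ℝ≥0∞)) (ω, s)) = ({ω : Ω | W ω ≤ s}).indicator
        (fun _ => (1 : ℝ≥0∞)) := by
      funext ω
      by_cases h : W ω ≤ s
      · rw [indicator_of_mem (by exact h) (fun _ => (1 : ℝ≥0∞)),
          indicator_of_mem (by exact h) (fun _ => (1 : ℝ≥0∞))]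
      · rw [indicator_of_notMem (by exact h) (fun _ => (1 : ℝ≥0∞)),
          indicator_of_notMem (by exact h) (fun _ => (1 : ℝ≥0∞))]
    have hms : MeasurableSet {ω : Ω | W ω ≤ s} := hW measurableSet_Iic
    rw [hfun, lintegral_indicator_const hms, one_mul]
  have hL : ∫⁻ ω, (∫⁻ s in Iic t, ({p : Ω × ℝ | W p.1 ≤ p.2}).indicator
      (fun _ => (1 : ℝ≥0∞)) (ω, s)) ∂P = ∫⁻ ω, ENNReal.ofReal (t - W ω) ∂P := by
    apply lintegral_congr
    intro ω
    have hfun : (fun s => ({p : Ω × ℝ | W p.1 ≤ p.2}).indicator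
        (fun _ => (1 : ℝ≥0∞)) (ω, s)) = (Ici (W ω)).indicator (fun _ => (1 : ℝ≥0∞)) := by
      funext s
      by_cases h : W ω ≤ s
      · rw [indicator_of_mem (by exact h) (fun _ => (1 : ℝ≥0∞)),
          indicator_of_mem (by exact h) (fun _ => (1 : ℝ≥0∞))]
      · rw [indicator_of_notMem (by exact h) (fun _ => (1 : ℝ≥0∞)),
          indicator_of_notMem (by exact h) (fun _ => (1 : ℝ≥0∞))]
    rw [hfun, lintegral_indicator_const measurableSet_Ici, one_mul,
      Measure.restrict_apply measurableSet_Ici, Ici_inter_Iic, Real.volume_Icc]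
  have hbound : ∫⁻ ω, ENNReal.ofReal (t - W ω) ∂P < ⊤ := by
    have hb : ∀ ω, ENNReal.ofReal (t - W ω) ≤
        ENNReal.ofReal |t| + ENNReal.ofReal |W ω| := by
      intro ω
      rw [← ENNReal.ofReal_add (abs_nonneg _) (abs_nonneg _)]
      apply ENNReal.ofReal_le_ofReal
      have h1 : t ≤ |t| := le_abs_self t
      have h2 : -W ω ≤ |W ω| := neg_le_abs _
      linarith
    calc ∫⁻ ω, ENNReal.ofReal (t - W ω) ∂P
        ≤ ∫⁻ ω, (ENNReal.ofReal |t| + ENNReal.ofReal |W ω|) ∂P := lintegral_mono hb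
      _ = ENNReal.ofReal |t| * P univ + ∫⁻ ω, ENNReal.ofReal |W ω| ∂P := by
          rw [lintegral_add_left measurable_const, lintegral_const]
      _ < ⊤ := by
          apply ENNReal.add_lt_top.2
          constructor
          · rw [measure_univ, mul_one]; exact ENNReal.ofReal_lt_top
          · have : ∫⁻ ω, ENNReal.ofReal |W ω| ∂P = ∫⁻ ω, (‖W ω‖₊ : ℝ≥0∞) ∂P :=
              lintegral_congr fun ω => (Real.enorm_eq_ofReal_abs _).symm
            rw [this]
            exact hWi.2
  rw [hR] at swap
  rw [← swap, hL]
  exact hbound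

lemma fin2 (hW : Measurable W) (hWi : Integrable W P) (t : ℝ) :
    ∫⁻ s in Ioi t, P {ω | s < W ω} < ⊤ := by
  have hS : MeasurableSet {p : Ω × ℝ | p.2 < W p.1} :=
    measurableSet_lt measurable_snd (hW.comp measurable_fst)
  have hf : AEMeasurable (Function.uncurry fun ω s =>
      ({p : Ω × ℝ | p.2 < W p.1}).indicator (fun _ => (1 : ℝ≥0∞)) (ω, s))
      (P.prod (volume.restrict (Ioi t))) :=
    (measurable_const.indicator hS).aemeasurable
  have swap := lintegral_lintegral_swap hf
  have hR : ∫⁻ s in Ioi t, ∫⁻ ω, ({p : Ω × ℝ | p.2 < W p.1}).indicator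
      (fun _ => (1 : ℝ≥0∞)) (ω, s) ∂P = ∫⁻ s in Ioi t, P {ω | s < W ω} := by
    apply lintegral_congr
    intro s
    have hfun : (fun ω => ({p : Ω × ℝ | p.2 < W p.1}).indicator
        (fun _ => (1 : ℝ≥0∞)) (ω, s)) = ({ω : Ω | s < W ω}).indicator
        (fun _ => (1 : ℝ≥0∞)) := by
      funext ω
      by_cases h : s < W ω
      · rw [indicator_of_mem (by exact h) (fun _ => (1 : ℝ≥0∞)),
          indicator_of_mem (by exact h) (fun _ => (1 : ℝ≥0∞))]
      · rw [indicator_of_notMem (by exact h) (fun _ => (1 : ℝ≥0∞)),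
          indicator_of_notMem (by exact h) (fun _ => (1 : ℝ≥0∞))]
    have hms : MeasurableSet {ω : Ω | s < W ω} := measurableSet_lt measurable_const hW
    rw [hfun, lintegral_indicator_const hms, one_mul]
  have hL : ∫⁻ ω, (∫⁻ s in Ioi t, ({p : Ω × ℝ | p.2 < W p.1}).indicator
      (fun _ => (1 : ℝ≥0∞)) (ω, s)) ∂P = ∫⁻ ω, ENNReal.ofReal (W ω - t) ∂P := by
    apply lintegral_congr
    intro ω
    have hfun : (fun s => ({p : Ω × ℝ | p.2 < W p.1}).indicator
        (fun _ => (1 : ℝ≥0∞)) (ω, s)) = (Iio (W ω)).indicator (fun _ => (1 : ℝ≥0∞)) := by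
      funext s
      by_cases h : s < W ω
      · rw [indicator_of_mem (by exact h) (fun _ => (1 : ℝ≥0∞)),
          indicator_of_mem (by exact h) (fun _ => (1 : ℝ≥0∞))]
      · rw [indicator_of_notMem (by exact h) (fun _ => (1 : ℝ≥0∞)),
          indicator_of_notMem (by exact h) (fun _ => (1 : ℝ≥0∞))]
    rw [hfun, lintegral_indicator_const measurableSet_Iio, one_mul,
      Measure.restrict_apply measurableSet_Iio, Iio_inter_Ioi, Real.volume_Ioo]
  have hbound : ∫⁻ ω, ENNReal.ofReal (W ω - t) ∂P < ⊤ := by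
    have hb : ∀ ω, ENNReal.ofReal (W ω - t) ≤
        ENNReal.ofReal |t| + ENNReal.ofReal |W ω| := by
      intro ω
      rw [← ENNReal.ofReal_add (abs_nonneg _) (abs_nonneg _)]
      apply ENNReal.ofReal_le_ofReal
      have h1 : -t ≤ |t| := neg_le_abs _
      have h2 : W ω ≤ |W ω| := le_abs_self _
      linarith
    calc ∫⁻ ω, ENNReal.ofReal (W ω - t) ∂P
        ≤ ∫⁻ ω, (ENNReal.ofReal |t| + ENNReal.ofReal |W ω|) ∂P := lintegral_mono hb
      _ = ENNReal.ofReal |t| * P univ + ∫⁻ ω, ENNReal.ofReal |W ω| ∂P := by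
          rw [lintegral_add_left measurable_const, lintegral_const]
      _ < ⊤ := by
          apply ENNReal.add_lt_top.2
          constructor
          · rw [measure_univ, mul_one]; exact ENNReal.ofReal_lt_top
          · have : ∫⁻ ω, ENNReal.ofReal |W ω| ∂P = ∫⁻ ω, (‖W ω‖₊ : ℝ≥0∞) ∂P :=
              lintegral_congr fun ω => (Real.enorm_eq_ofReal_abs _).symm
            rw [this]
            exact hWi.2
  rw [hR] at swap
  rw [← swap, hL]
  exact hbound
lemma aemeasurable_qf (hW : Measurable W) :
    AEMeasurable (qf P W) (volume.restrict (Ioo (0 : ℝ) 1)) :=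
  aemeasurable_restrict_of_monotoneOn measurableSet_Ioo (qf_monoOn hW)

lemma integrable_qf (hW : Measurable W) (hWi : Integrable W P) :
    IntegrableOn (qf P W) (Ioo (0 : ℝ) 1) volume := by
  refine ⟨(aemeasurable_qf hW).aestronglyMeasurable, ?_⟩
  have hb : ∀ u : ℝ, (‖qf P W u‖₊ : ℝ≥0∞) ≤
      ENNReal.ofReal (0 - qf P W u) + ENNReal.ofReal (qf P W u - 0) := by
    intro u
    rw [← enorm_eq_nnnorm, Real.enorm_eq_ofReal_abs]
    rcases le_total (qf P W u) 0 with h | h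
    · calc ENNReal.ofReal |qf P W u| = ENNReal.ofReal (0 - qf P W u) := by
            rw [abs_of_nonpos h]; ring_nf
        _ ≤ _ := le_self_add
    · calc ENNReal.ofReal |qf P W u| = ENNReal.ofReal (qf P W u - 0) := by
            rw [abs_of_nonneg h]; ring_nf
        _ ≤ _ := le_add_self
  have hmeas : AEMeasurable (fun u => ENNReal.ofReal (0 - qf P W u))
      (volume.restrict (Ioo (0 : ℝ) 1)) :=
    (aemeasurable_const.sub (aemeasurable_qf hW)).ennreal_ofReal
  calc ∫⁻ u in Ioo (0 : ℝ) 1, (‖qf P W u‖₊ : ℝ≥0∞)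
      ≤ ∫⁻ u in Ioo (0 : ℝ) 1,
          (ENNReal.ofReal (0 - qf P W u) + ENNReal.ofReal (qf P W u - 0)) :=
        lintegral_mono hb
    _ = (∫⁻ u in Ioo (0 : ℝ) 1, ENNReal.ofReal (0 - qf P W u)) +
          ∫⁻ u in Ioo (0 : ℝ) 1, ENNReal.ofReal (qf P W u - 0) :=
        lintegral_add_left' hmeas _
    _ < ⊤ := by
        apply ENNReal.add_lt_top.2
        constructor
        · rw [← key1 hW 0]
          exact fin1 hW hWi 0
        · rw [key2 hW 0]
          exact fin2 hW hWi 0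

lemma F_integrableOn (hW : Measurable W) (hWi : Integrable W P) (t : ℝ) :
    IntegrableOn (fun s => (P {ω | W ω ≤ s}).toReal) (Iic t) volume := by
  have hmono : Monotone (fun s => (P {ω | W ω ≤ s}).toReal) := by
    intro s s' hss'
    apply ENNReal.toReal_mono (measure_ne_top _ _)
    exact measure_mono fun ω hω => le_trans hω hss'
  refine ⟨(hmono.measurable.aestronglyMeasurable).restrict, ?_⟩
  have heq : ∀ s : ℝ, (‖(P {ω | W ω ≤ s}).toReal‖₊ : ℝ≥0∞) = P {ω | W ω ≤ s} := by
    intro s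
    rw [← enorm_eq_nnnorm, Real.enorm_eq_ofReal ENNReal.toReal_nonneg, ENNReal.ofReal_toReal (measure_ne_top _ _)]
  unfold HasFiniteIntegral
  calc ∫⁻ s in Iic t, (‖(P {ω | W ω ≤ s}).toReal‖₊ : ℝ≥0∞)
      = ∫⁻ s in Iic t, P {ω | W ω ≤ s} := lintegral_congr fun s => heq s
    _ < ⊤ := fin1 hW hWi t

lemma realKey (hW : Measurable W) (hWi : Integrable W P) (t : ℝ) :
    ∫ s in Iic t, (P {ω | W ω ≤ s}).toReal =
      ∫ u in Ioo (0 : ℝ) 1, max (t - qf P W u) 0 := by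
  have hconst : IntegrableOn (fun _ : ℝ => t) (Ioo (0 : ℝ) 1) volume :=
    integrableOn_const (by rw [Real.volume_Ioo]; exact ENNReal.ofReal_ne_top)
  have hmax_int : Integrable (fun u => max (t - qf P W u) 0)
      (volume.restrict (Ioo (0 : ℝ) 1)) :=
    (hconst.sub (integrable_qf hW hWi)).pos_part
  have h1 : ENNReal.ofReal (∫ s in Iic t, (P {ω | W ω ≤ s}).toReal) =
      ∫⁻ s in Iic t, P {ω | W ω ≤ s} := by
    rw [MeasureTheory.ofReal_integral_eq_lintegral_ofReal (F_integrableOn hW hWi t)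
      (Eventually.of_forall fun s => ENNReal.toReal_nonneg)]
    exact lintegral_congr fun s => ENNReal.ofReal_toReal (measure_ne_top _ _)
  have h2 : ENNReal.ofReal (∫ u in Ioo (0 : ℝ) 1, max (t - qf P W u) 0) =
      ∫⁻ u in Ioo (0 : ℝ) 1, ENNReal.ofReal (t - qf P W u) := by
    rw [MeasureTheory.ofReal_integral_eq_lintegral_ofReal hmax_int
      (Eventually.of_forall fun u => le_max_right _ 0)]
    apply lintegral_congr
    intro u
    rcases le_total (t - qf P W u) 0 with h | h
    · rw [max_eq_right h, ENNReal.ofReal_zero, ENNReal.ofReal_of_nonpos h]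
    · rw [max_eq_left h]
  have := h1.trans ((key1 hW t).trans h2.symm)
  exact (ENNReal.ofReal_eq_ofReal_iff
    (integral_nonneg fun s => ENNReal.toReal_nonneg)
    (integral_nonneg fun u => le_max_right _ 0)).1 this
variable {WX WY : Ω → ℝ}

lemma forward_lt (hWX : Measurable WX) (hWXi : Integrable WX P)
    (hWY : Measurable WY) (hWYi : Integrable WY P)
    (hG : ∀ t : ℝ, ∫ u in Ioo (0 : ℝ) 1, max (t - qf P WY u) 0 ≤
      ∫ u in Ioo (0 : ℝ) 1, max (t - qf P WX u) 0)
    {α : ℝ} (hα : α ∈ Ioo (0 : ℝ) 1) :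
    ∫ u in Ioo (0 : ℝ) α, qf P WX u ≤ ∫ u in Ioo (0 : ℝ) α, qf P WY u := by
  set t₀ := qf P WX α with ht₀
  have hXsub : Ioo (0 : ℝ) α ⊆ Ioo (0 : ℝ) 1 := Ioo_subset_Ioo le_rfl (le_of_lt hα.2)
  have hconstA : IntegrableOn (fun _ : ℝ => t₀) (Ioo (0 : ℝ) α) volume :=
    integrableOn_const (by rw [Real.volume_Ioo]; exact ENNReal.ofReal_ne_top)
  have hconst1 : IntegrableOn (fun _ : ℝ => t₀) (Ioo (0 : ℝ) 1) volume :=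
    integrableOn_const (by rw [Real.volume_Ioo]; exact ENNReal.ofReal_ne_top)
  have hqXint : IntegrableOn (qf P WX) (Ioo (0 : ℝ) α) volume :=
    (integrable_qf hWX hWXi).mono_set hXsub
  have hqYint : IntegrableOn (qf P WY) (Ioo (0 : ℝ) α) volume :=
    (integrable_qf hWY hWYi).mono_set hXsub
  have hmaxY_int : IntegrableOn (fun u => max (t₀ - qf P WY u) 0) (Ioo (0 : ℝ) 1) volume :=
    (hconst1.sub (integrable_qf hWY hWYi)).pos_part
  have hXeq : ∫ u in Ioo (0 : ℝ) 1, max (t₀ - qf P WX u) 0 =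
      α * t₀ - ∫ u in Ioo (0 : ℝ) α, qf P WX u := by
    have h1 : EqOn (fun u => max (t₀ - qf P WX u) 0)
        ((Ioo (0 : ℝ) α).indicator (fun u => t₀ - qf P WX u)) (Ioo (0 : ℝ) 1) := by
      intro u hu
      by_cases hu' : u < α
      · have hmem : u ∈ Ioo (0 : ℝ) α := ⟨hu.1, hu'⟩
        rw [Set.indicator_of_mem hmem]
        exact max_eq_left (sub_nonneg.2 (qf_monoOn hWX hu hα (le_of_lt hu')))
      · have hmem : u ∉ Ioo (0 : ℝ) α := fun hm => hu' hm.2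
        rw [Set.indicator_of_notMem hmem]
        exact max_eq_right (sub_nonpos.2 (qf_monoOn hWX hα hu (not_lt.1 hu')))
    rw [setIntegral_congr_fun measurableSet_Ioo h1,
      setIntegral_indicator measurableSet_Ioo,
      inter_eq_self_of_subset_right hXsub,
      integral_sub hconstA hqXint, setIntegral_const, Real.volume_real_Ioo_of_le (le_of_lt hα.1), sub_zero,
      smul_eq_mul]
  have hYle : α * t₀ - ∫ u in Ioo (0 : ℝ) α, qf P WY u ≤
      ∫ u in Ioo (0 : ℝ) 1, max (t₀ - qf P WY u) 0 := by
    have e1 : ∫ u in Ioo (0 : ℝ) α, (t₀ - qf P WY u) =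
        α * t₀ - ∫ u in Ioo (0 : ℝ) α, qf P WY u := by
      rw [integral_sub hconstA hqYint, setIntegral_const, Real.volume_real_Ioo_of_le (le_of_lt hα.1), sub_zero,
        smul_eq_mul]
    have e2 : ∫ u in Ioo (0 : ℝ) α, (t₀ - qf P WY u) ≤
        ∫ u in Ioo (0 : ℝ) α, max (t₀ - qf P WY u) 0 :=
      integral_mono (hconstA.sub hqYint) (hmaxY_int.mono_set hXsub)
        fun u => le_max_left _ _
    have e3 : ∫ u in Ioo (0 : ℝ) α, max (t₀ - qf P WY u) 0 ≤
        ∫ u in Ioo (0 : ℝ) 1, max (t₀ - qf P WY u) 0 :=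
      setIntegral_mono_set hmaxY_int
        (Eventually.of_forall fun u => le_max_right _ _)
        (HasSubset.Subset.eventuallyLE hXsub)
    linarith
  have hGt := hG t₀
  linarith

lemma forward (hWX : Measurable WX) (hWXi : Integrable WX P)
    (hWY : Measurable WY) (hWYi : Integrable WY P)
    (hG : ∀ t : ℝ, ∫ u in Ioo (0 : ℝ) 1, max (t - qf P WY u) 0 ≤
      ∫ u in Ioo (0 : ℝ) 1, max (t - qf P WX u) 0) :
    ∀ α : ℝ, 0 < α → α ≤ 1 →
      ∫ u in Ioo (0 : ℝ) α, qf P WX u ≤ ∫ u in Ioo (0 : ℝ) α, qf P WY u := by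
  intro α hα0 hαle
  by_cases hα1 : α < 1
  · exact forward_lt hWX hWXi hWY hWYi hG ⟨hα0, hα1⟩
  · have hαeq : α = 1 := le_antisymm hαle (not_lt.1 hα1)
    subst hαeq
    set S : ℕ → Set ℝ := fun n => Ioo 0 (1 - 1 / ((n : ℝ) + 2)) with hS
    have hsm : ∀ n, MeasurableSet (S n) := fun n => measurableSet_Ioo
    have hmono : Monotone S := by
      intro m n hmn
      apply Ioo_subset_Ioo le_rfl
      have h1 : 1 / ((n : ℝ) + 2) ≤ 1 / ((m : ℝ) + 2) := by
        apply one_div_le_one_div_of_le (by positivity)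
        have : (m : ℝ) ≤ (n : ℝ) := by exact_mod_cast hmn
        linarith
      linarith
    have hmem : ∀ n : ℕ, (1 - 1 / ((n : ℝ) + 2)) ∈ Ioo (0 : ℝ) 1 := by
      intro n
      constructor
      · have h2 : 1 / ((n : ℝ) + 2) ≤ 1 / 2 := by
          apply one_div_le_one_div_of_le (by norm_num)
          have : (0 : ℝ) ≤ (n : ℝ) := Nat.cast_nonneg n
          linarith
        linarith
      · have : 0 < 1 / ((n : ℝ) + 2) := by positivity
        linarith
    have hunion : (⋃ n, S n) = Ioo (0 : ℝ) 1 := by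
      ext u
      simp only [mem_iUnion, hS, mem_Ioo]
      constructor
      · rintro ⟨n, h1, h2⟩
        exact ⟨h1, h2.trans (hmem n).2⟩
      · rintro ⟨h1, h2⟩
        obtain ⟨n, hn⟩ := exists_nat_one_div_lt (sub_pos.2 h2)
        refine ⟨n, h1, ?_⟩
        have h3 : 1 / ((n : ℝ) + 2) ≤ 1 / ((n : ℝ) + 1) := by
          apply one_div_le_one_div_of_le (by positivity)
          linarith
        linarith
    have hX := tendsto_setIntegral_of_monotone hsm hmono
      (by rw [hunion]; exact integrable_qf hWX hWXi)
    have hY := tendsto_setIntegral_of_monotone hsm hmono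
      (by rw [hunion]; exact integrable_qf hWY hWYi)
    rw [hunion] at hX hY
    apply le_of_tendsto_of_tendsto' hX hY
    intro n
    exact forward_lt hWX hWXi hWY hWYi hG (hmem n)

lemma backward (hWX : Measurable WX) (hWXi : Integrable WX P)
    (hWY : Measurable WY) (hWYi : Integrable WY P)
    (hq : ∀ α : ℝ, 0 < α → α ≤ 1 →
      ∫ u in Ioo (0 : ℝ) α, qf P WX u ≤ ∫ u in Ioo (0 : ℝ) α, qf P WY u) :
    ∀ t : ℝ, ∫ u in Ioo (0 : ℝ) 1, max (t - qf P WY u) 0 ≤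
      ∫ u in Ioo (0 : ℝ) 1, max (t - qf P WX u) 0 := by
  intro t
  set A := Ioo (0 : ℝ) 1 ∩ {u | qf P WY u < t} with hA
  have hdc : ∀ ⦃u v : ℝ⦄, u ∈ Ioo (0 : ℝ) 1 → v ∈ A → u ≤ v → u ∈ A :=
    fun u v hu hv huv => ⟨hu, lt_of_le_of_lt (qf_monoOn hWY hu hv.1 huv) hv.2⟩
  have hAsub : A ⊆ Ioo (0 : ℝ) 1 := inter_subset_left
  have hAmeas : MeasurableSet A := downward_measurable (S := A) hAsub hdc
  have hconst1 : IntegrableOn (fun _ : ℝ => t) (Ioo (0 : ℝ) 1) volume :=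
    integrableOn_const (by rw [Real.volume_Ioo]; exact ENNReal.ofReal_ne_top)
  have hmaxX_int : IntegrableOn (fun u => max (t - qf P WX u) 0) (Ioo (0 : ℝ) 1) volume :=
    (hconst1.sub (integrable_qf hWX hWXi)).pos_part
  have hmaxY_int : IntegrableOn (fun u => max (t - qf P WY u) 0) (Ioo (0 : ℝ) 1) volume :=
    (hconst1.sub (integrable_qf hWY hWYi)).pos_part
  have hsub_int : IntegrableOn (fun u => qf P WY u - qf P WX u) (Ioo (0 : ℝ) 1) volume :=
    (integrable_qf hWY hWYi).sub (integrable_qf hWX hWXi)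
  have hind_int : IntegrableOn (A.indicator (fun u => qf P WY u - qf P WX u))
      (Ioo (0 : ℝ) 1) volume := hsub_int.indicator hAmeas
  have hptwise : ∀ u ∈ Ioo (0 : ℝ) 1,
      A.indicator (fun u => qf P WY u - qf P WX u) u ≤
        max (t - qf P WX u) 0 - max (t - qf P WY u) 0 := by
    intro u hu
    by_cases h : qf P WY u < t
    · have hmem : u ∈ A := ⟨hu, h⟩
      rw [Set.indicator_of_mem hmem]
      rw [max_eq_left (by linarith : (0 : ℝ) ≤ t - qf P WY u)]
      have := le_max_left (t - qf P WX u) (0 : ℝ)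
      linarith
    · have hmem : u ∉ A := fun hm => h hm.2
      rw [Set.indicator_of_notMem hmem]
      rw [max_eq_right (by push_neg at h; linarith : t - qf P WY u ≤ (0 : ℝ))]
      have := le_max_right (t - qf P WX u) (0 : ℝ)
      linarith
  have h2 : ∫ u in Ioo (0 : ℝ) 1, A.indicator (fun u => qf P WY u - qf P WX u) u ≤
      ∫ u in Ioo (0 : ℝ) 1, (max (t - qf P WX u) 0 - max (t - qf P WY u) 0) :=
    setIntegral_mono_on hind_int (hmaxX_int.sub hmaxY_int) measurableSet_Ioo hptwise
  have h3 : ∫ u in Ioo (0 : ℝ) 1, A.indicator (fun u => qf P WY u - qf P WX u) u =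
      ∫ u in A, (qf P WY u - qf P WX u) := by
    rw [setIntegral_indicator hAmeas, inter_eq_self_of_subset_right hAsub]
  have h4 : 0 ≤ ∫ u in A, (qf P WY u - qf P WX u) := by
    rcases A.eq_empty_or_nonempty with h | hne
    · simp [h]
    · obtain ⟨c, hc0, hc1, hsub1, hsub2⟩ := downward_structure hAsub hdc hne
      have hae : A =ᵐ[volume] Ioo (0 : ℝ) c := by
        rw [MeasureTheory.ae_eq_set]
        constructor
        · have hsb : A \ Ioo (0 : ℝ) c ⊆ {c} := by
            intro x hx
            rcases lt_or_eq_of_le (hsub2 hx.1).2 with h' | h'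
            · exact absurd (⟨(hsub2 hx.1).1, h'⟩ : x ∈ Ioo (0 : ℝ) c) hx.2
            · exact h'
          exact measure_mono_null hsb (measure_singleton c)
        · have : Ioo (0 : ℝ) c \ A = ∅ := diff_eq_empty.2 hsub1
          rw [this, measure_empty]
      rw [setIntegral_congr_set hae]
      have hqc := hq c hc0 hc1
      have hci : IntegrableOn (qf P WX) (Ioo (0 : ℝ) c) volume :=
        (integrable_qf hWX hWXi).mono_set (Ioo_subset_Ioo le_rfl hc1)
      have hci' : IntegrableOn (qf P WY) (Ioo (0 : ℝ) c) volume :=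
        (integrable_qf hWY hWYi).mono_set (Ioo_subset_Ioo le_rfl hc1)
      rw [integral_sub hci' hci]
      linarith
  have h5 : ∫ u in Ioo (0 : ℝ) 1, (max (t - qf P WX u) 0 - max (t - qf P WY u) 0) =
      (∫ u in Ioo (0 : ℝ) 1, max (t - qf P WX u) 0) -
        ∫ u in Ioo (0 : ℝ) 1, max (t - qf P WY u) 0 :=
    integral_sub hmaxX_int hmaxY_int
  rw [h3] at h2
  linarith
end SSDProof

/-- Second-order stochastic dominance is characterized by the Average-Value-at-Risk:
for integrable `X, Y`, `Y ⪯_SSD X` (i.e. `∫_{-∞}^t F_Y(s) ds ≥ ∫_{-∞}^t F_X(s) ds`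
for all `t`) if and only if `AV@R_α(Y) ≥ AV@R_α(X)` for all `α ∈ (0,1]`. -/
theorem ssd_iff_avaR (P : Measure Ω) [IsProbabilityMeasure P]
    (X Y : Ω → ℝ) (hX : Integrable X P) (hY : Integrable Y P) :
    (∀ t : ℝ, (∫ s in Iic t, (P {ω | X ω ≤ s}).toReal) ≥
        ∫ s in Iic t, (P {ω | Y ω ≤ s}).toReal) ↔
      (∀ α : ℝ, 0 < α → α ≤ 1 → AVaR P α X ≥ AVaR P α Y) := by
  classical
  open SSDProof in
  set WX := hX.1.mk X with hWXdef
  set WY := hY.1.mk Y with hWYdef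
  have hWXm : Measurable WX := hX.1.stronglyMeasurable_mk.measurable
  have hWYm : Measurable WY := hY.1.stronglyMeasurable_mk.measurable
  have haeX : X =ᵐ[P] WX := hX.1.ae_eq_mk
  have haeY : Y =ᵐ[P] WY := hY.1.ae_eq_mk
  have hWXi : Integrable WX P := hX.congr haeX
  have hWYi : Integrable WY P := hY.congr haeY
  have hFX : ∀ s : ℝ, P {ω | X ω ≤ s} = P {ω | WX ω ≤ s} := by
    intro s
    apply measure_congr
    filter_upwards [haeX] with ω hω
    show (X ω ≤ s) = (WX ω ≤ s)
    rw [hω]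
  have hFY : ∀ s : ℝ, P {ω | Y ω ≤ s} = P {ω | WY ω ≤ s} := by
    intro s
    apply measure_congr
    filter_upwards [haeY] with ω hω
    show (Y ω ≤ s) = (WY ω ≤ s)
    rw [hω]
  have hVX : ∀ β : ℝ, realVaR P β X = - SSDProof.qf P WX β := by
    intro β
    have hset : ∀ r : ℝ, P {ω | X ω + r < 0} = P {ω | WX ω + r < 0} := by
      intro r
      apply measure_congr
      filter_upwards [haeX] with ω hω
      show (X ω + r < 0) = (WX ω + r < 0)
      rw [hω]
    have : realVaR P β X = realVaR P β WX := by
      unfold realVaR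
      congr 1
      ext r
      simp only [mem_setOf_eq, hset r]
    rw [this, SSDProof.realVaR_eq_neg_qf]
  have hVY : ∀ β : ℝ, realVaR P β Y = - SSDProof.qf P WY β := by
    intro β
    have hset : ∀ r : ℝ, P {ω | Y ω + r < 0} = P {ω | WY ω + r < 0} := by
      intro r
      apply measure_congr
      filter_upwards [haeY] with ω hω
      show (Y ω + r < 0) = (WY ω + r < 0)
      rw [hω]
    have : realVaR P β Y = realVaR P β WY := by
      unfold realVaR
      congr 1
      ext r
      simp only [mem_setOf_eq, hset r]
    rw [this, SSDProof.realVaR_eq_neg_qf]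
  have hLHS : (∀ t : ℝ, (∫ s in Iic t, (P {ω | X ω ≤ s}).toReal) ≥
      ∫ s in Iic t, (P {ω | Y ω ≤ s}).toReal) ↔
      (∀ t : ℝ, ∫ u in Ioo (0 : ℝ) 1, max (t - SSDProof.qf P WY u) 0 ≤
        ∫ u in Ioo (0 : ℝ) 1, max (t - SSDProof.qf P WX u) 0) := by
    apply forall_congr'
    intro t
    rw [ge_iff_le]
    have e1 : ∫ s in Iic t, (P {ω | X ω ≤ s}).toReal =
        ∫ u in Ioo (0 : ℝ) 1, max (t - SSDProof.qf P WX u) 0 := by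
      simp only [hFX]
      exact SSDProof.realKey hWXm hWXi t
    have e2 : ∫ s in Iic t, (P {ω | Y ω ≤ s}).toReal =
        ∫ u in Ioo (0 : ℝ) 1, max (t - SSDProof.qf P WY u) 0 := by
      simp only [hFY]
      exact SSDProof.realKey hWYm hWYi t
    rw [e1, e2]
  have hAX : ∀ α : ℝ, AVaR P α X = (1 / α) * (- ∫ u in Ioo (0 : ℝ) α, SSDProof.qf P WX u) := by
    intro α
    rw [AVaR]
    simp only [hVX]
    rw [integral_neg]
  have hAY : ∀ α : ℝ, AVaR P α Y = (1 / α) * (- ∫ u in Ioo (0 : ℝ) α, SSDProof.qf P WY u) := by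
    intro α
    rw [AVaR]
    simp only [hVY]
    rw [integral_neg]
  have hRHS : (∀ α : ℝ, 0 < α → α ≤ 1 → AVaR P α X ≥ AVaR P α Y) ↔
      (∀ α : ℝ, 0 < α → α ≤ 1 → ∫ u in Ioo (0 : ℝ) α, SSDProof.qf P WX u ≤
        ∫ u in Ioo (0 : ℝ) α, SSDProof.qf P WY u) := by
    apply forall_congr'
    intro α
    refine imp_congr_right fun hα0 => imp_congr_right fun hα1 => ?_
    rw [hAX, hAY, ge_iff_le]
    have h1 : (0 : ℝ) < 1 / α := by positivity
    rw [mul_le_mul_iff_right₀ h1]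
    constructor <;> intro h <;> linarith
  rw [hLHS, hRHS]
  constructor
  · intro hG
    exact SSDProof.forward hWXm hWXi hWYm hWYi hG
  · intro hq
    exact SSDProof.backward hWXm hWXi hWYm hWYi hq
end
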